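/- arXiv:1604.00609 — 12 statements merged into one kernel-verified Lean document; each statement's English description precedes it below -/
import Mathlib

section
/- Let G be a topological group equipped with a compatible bi-invariant metric d. If a sequence (U_n) of nonempty compact subsets of G, each of which is the underlying set of a subgroup of G, converges in the Hausdorff metric to a nonempty compact set U, then U is the underlying set of a subgroup of G. -/
open TopologicalSpace Metric

/-- If a sequence of nonempty compact subsets of a topological group `G`, equipped with
a compatible bi-invariant metric, each of which is the underlying set of a subgroup,
converges in the Hausdorff metric to a nonempty compact set `L`, then `L` is the
underlying set of a subgroup. -/
theorem limit_of_compact_subgroups_is_subgroup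
    (G : Type*) [Group G] [MetricSpace G] [IsTopologicalGroup G]
    (hbi : ∀ g x y : G, dist (g * x) (g * y) = dist x y ∧ dist (x * g) (y * g) = dist x y)
    (U : ℕ → NonemptyCompacts G)
    (hsub : ∀ n, ∃ H : Subgroup G, ((U n : Set G)) = (H : Set G))
    (L : NonemptyCompacts G)
    (hconv : Filter.Tendsto U Filter.atTop (nhds L)) :
    ∃ H : Subgroup G, (L : Set G) = (H : Set G) := by
  have hLcl : IsClosed (L : Set G) := L.isCompact.isClosed
  have hLne : (L : Set G).Nonempty := L.nonempty
  have key : ∀ ε > (0:ℝ), ∃ n, hausdorffDist (U n : Set G) (L : Set G) < ε := by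
    intro ε hε
    rw [Metric.tendsto_atTop] at hconv
    obtain ⟨N, hN⟩ := hconv ε hε
    refine ⟨N, ?_⟩
    have := hN N le_rfl
    rwa [NonemptyCompacts.dist_eq] at this
  have hfin : ∀ n, EMetric.hausdorffEdist (U n : Set G) (L : Set G) ≠ ⊤ := fun n =>
    hausdorffEdist_ne_top_of_nonempty_of_bounded (U n).nonempty hLne
      (U n).isCompact.isBounded L.isCompact.isBounded
  have hfin' : ∀ n, EMetric.hausdorffEdist (L : Set G) (U n : Set G) ≠ ⊤ := fun n => by
    show Metric.hausdorffEDist (L : Set G) (U n : Set G) ≠ ⊤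
    rw [Metric.hausdorffEDist_comm]; exact hfin n
  -- membership criterion
  have mem_of_close : ∀ z : G, (∀ ε > (0:ℝ), infDist z (L : Set G) < ε) → z ∈ (L : Set G) := by
    intro z h
    rw [hLcl.mem_iff_infDist_zero hLne]
    by_contra hne
    have hpos : 0 < infDist z (L : Set G) := lt_of_le_of_ne infDist_nonneg (Ne.symm hne)
    exact lt_irrefl _ (h _ hpos)
  -- one membership
  have hone : (1 : G) ∈ (L : Set G) := by
    apply mem_of_close
    intro ε hε
    obtain ⟨n, hn⟩ := key ε hε
    obtain ⟨H, hH⟩ := hsub n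
    have h1 : (1 : G) ∈ (U n : Set G) := by rw [hH]; exact H.one_mem
    calc infDist (1 : G) (L : Set G) ≤ hausdorffDist (U n : Set G) (L : Set G) :=
          infDist_le_hausdorffDist_of_mem h1 (hfin n)
      _ < ε := hn
  -- mul membership
  have hmul : ∀ x y : G, x ∈ (L : Set G) → y ∈ (L : Set G) → x * y ∈ (L : Set G) := by
    intro x y hx hy
    apply mem_of_close
    intro ε hε
    obtain ⟨n, hn⟩ := key (ε / 3) (by linarith)
    obtain ⟨H, hH⟩ := hsub n
    obtain ⟨a, ha, hxa⟩ := exists_dist_lt_of_hausdorffDist_lt' hx hn (hfin n)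
    obtain ⟨b, hb, hyb⟩ := exists_dist_lt_of_hausdorffDist_lt' hy hn (hfin n)
    have hab : a * b ∈ (U n : Set G) := by
      rw [hH] at ha hb ⊢; exact H.mul_mem ha hb
    have hd : dist (x * y) (a * b) < 2 * (ε / 3) := by
      calc dist (x * y) (a * b) ≤ dist (x * y) (a * y) + dist (a * y) (a * b) :=
            dist_triangle _ _ _
        _ = dist x a + dist y b := by rw [(hbi y x a).2, (hbi a y b).1]
        _ < ε / 3 + ε / 3 := by rw [dist_comm x a, dist_comm y b]; exact add_lt_add hxa hyb
        _ = 2 * (ε / 3) := by ring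
    calc infDist (x * y) (L : Set G) ≤ infDist (a * b) (L : Set G) + dist (x * y) (a * b) :=
          infDist_le_infDist_add_dist
      _ = dist (x * y) (a * b) + infDist (a * b) (L : Set G) := add_comm _ _
      _ ≤ dist (x * y) (a * b) + hausdorffDist (U n : Set G) (L : Set G) := by
          gcongr; exact infDist_le_hausdorffDist_of_mem hab (hfin n)
      _ < 2 * (ε / 3) + ε / 3 := add_lt_add hd hn
      _ = ε := by ring
  -- inv membership
  have hinv : ∀ x : G, x ∈ (L : Set G) → x⁻¹ ∈ (L : Set G) := by
    intro x hx
    apply mem_of_close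
    intro ε hε
    obtain ⟨n, hn⟩ := key (ε / 2) (by linarith)
    obtain ⟨H, hH⟩ := hsub n
    obtain ⟨a, ha, hxa⟩ := exists_dist_lt_of_hausdorffDist_lt' hx hn (hfin n)
    have hai : a⁻¹ ∈ (U n : Set G) := by
      rw [hH] at ha ⊢; exact H.inv_mem ha
    have hd : dist x⁻¹ a⁻¹ < ε / 2 := by
      have : dist x⁻¹ a⁻¹ = dist a x := by
        have h1 := (hbi x x⁻¹ a⁻¹).1
        have h2 := (hbi a (x * x⁻¹) (x * a⁻¹)).2
        calc dist x⁻¹ a⁻¹ = dist (x * x⁻¹) (x * a⁻¹) := h1.symm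
          _ = dist (x * x⁻¹ * a) (x * a⁻¹ * a) := h2.symm
          _ = dist a x := by group
      rw [this]; exact hxa
    calc infDist x⁻¹ (L : Set G) ≤ infDist a⁻¹ (L : Set G) + dist x⁻¹ a⁻¹ :=
          infDist_le_infDist_add_dist
      _ = dist x⁻¹ a⁻¹ + infDist a⁻¹ (L : Set G) := add_comm _ _
      _ ≤ dist x⁻¹ a⁻¹ + hausdorffDist (U n : Set G) (L : Set G) := by
          gcongr; exact infDist_le_hausdorffDist_of_mem hai (hfin n)
      _ < ε / 2 + ε / 2 := add_lt_add hd hn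
      _ = ε := by ring
  exact ⟨{ carrier := (L : Set G), one_mem' := hone,
           mul_mem' := fun {a b} ha hb => hmul a b ha hb,
           inv_mem' := fun {a} ha => hinv a ha }, rfl⟩
end

section
/- Let G be a topological group equipped with a compatible bi-invariant metric d. Then the collection of nonempty compact subsets of G that are underlying sets of normal subgroups of G is a closed subset of the space of nonempty compact subsets of G with the Hausdorff metric. -/
open TopologicalSpace Metric Filter

private lemma hd_tendsto {G : Type*} [MetricSpace G]
    {K : ℕ → NonemptyCompacts G} {L : NonemptyCompacts G}
    (hK : Tendsto K atTop (nhds L)) :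
    Tendsto (fun n => dist (K n) L) atTop (nhds 0) :=
  (tendsto_iff_dist_tendsto_zero.mp hK)

private lemma hEdist_ne_top {G : Type*} [MetricSpace G]
    (A B : NonemptyCompacts G) : EMetric.hausdorffEdist (A : Set G) (B : Set G) ≠ ⊤ :=
  Metric.hausdorffEdist_ne_top_of_nonempty_of_bounded A.nonempty B.nonempty
    A.isCompact.isBounded B.isCompact.isBounded

/-- Limits of points of the converging compacts lie in the limit compact. -/
private lemma mem_of_tendsto_aux {G : Type*} [MetricSpace G]
    {K : ℕ → NonemptyCompacts G} {L : NonemptyCompacts G}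
    (hK : Tendsto K atTop (nhds L))
    {z : ℕ → G} {x : G} (hz : ∀ n, z n ∈ (K n : Set G))
    (hzx : Tendsto z atTop (nhds x)) : x ∈ (L : Set G) := by
  have h1 : Tendsto (fun n => infDist (z n) (L : Set G)) atTop (nhds (infDist x (L : Set G))) :=
    ((continuous_infDist_pt (L : Set G)).tendsto x).comp hzx
  have h2 : ∀ n, infDist (z n) (L : Set G) ≤ dist (K n) L := fun n => by
    rw [NonemptyCompacts.dist_eq]
    exact Metric.infDist_le_hausdorffDist_of_mem (hz n) (hEdist_ne_top _ _)
  have hle : infDist x (L : Set G) ≤ 0 :=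
    le_of_tendsto_of_tendsto' h1 (hd_tendsto hK) h2
  have : infDist x (L : Set G) = 0 := le_antisymm hle Metric.infDist_nonneg
  exact (L.isCompact.isClosed.mem_iff_infDist_zero L.nonempty).mpr this

/-- Every point of the limit compact is a limit of points of the converging compacts. -/
private lemma exists_seq_aux {G : Type*} [MetricSpace G]
    {K : ℕ → NonemptyCompacts G} {L : NonemptyCompacts G}
    (hK : Tendsto K atTop (nhds L)) {x : G} (hx : x ∈ (L : Set G)) :
    ∃ z : ℕ → G, (∀ n, z n ∈ (K n : Set G)) ∧ Tendsto z atTop (nhds x) := by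
  have hch : ∀ n, ∃ y ∈ (K n : Set G), infDist x (K n : Set G) = dist x y := fun n =>
    (K n).isCompact.exists_infDist_eq_dist (K n).nonempty x
  choose z hz hdz using hch
  refine ⟨z, hz, ?_⟩
  rw [tendsto_iff_dist_tendsto_zero]
  have hbound : ∀ n, dist (z n) x ≤ dist (K n) L := fun n => by
    rw [dist_comm, ← hdz n, NonemptyCompacts.dist_eq, Metric.hausdorffDist_comm]
    exact Metric.infDist_le_hausdorffDist_of_mem hx (hEdist_ne_top _ _)
  exact squeeze_zero (fun n => dist_nonneg) hbound (hd_tendsto hK)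

/-- In a topological group `G` equipped with a compatible bi-invariant metric, the collection
of nonempty compact subsets that are underlying sets of normal subgroups of `G` is closed in
the hyperspace of nonempty compact subsets of `G` with the Hausdorff metric. -/
theorem isClosed_normal_compact_subgroups
    (G : Type*) [Group G] [MetricSpace G] [IsTopologicalGroup G]
    (hbi : ∀ g x y : G, dist (g * x) (g * y) = dist x y ∧ dist (x * g) (y * g) = dist x y) :
    IsClosed {K : NonemptyCompacts G |
      ∃ H : Subgroup G, H.Normal ∧ (K : Set G) = (H : Set G)} := by
  refine IsSeqClosed.isClosed ?_
  intro K L hmem hK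
  choose H hnorm hset using hmem
  have hKmem : ∀ n (x : G), x ∈ (K n : Set G) ↔ x ∈ H n := by
    intro n x; rw [← SetLike.mem_coe, ← hset n]
  refine ⟨{ carrier := (L : Set G)
            one_mem' := ?_
            mul_mem' := ?_
            inv_mem' := ?_ }, ⟨?_⟩, rfl⟩
  · intro a b ha hb
    obtain ⟨za, hza, hta⟩ := exists_seq_aux hK ha
    obtain ⟨zb, hzb, htb⟩ := exists_seq_aux hK hb
    exact mem_of_tendsto_aux hK
      (fun n => (hKmem n _).mpr (mul_mem ((hKmem n _).mp (hza n)) ((hKmem n _).mp (hzb n))))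
      (hta.mul htb)
  · exact mem_of_tendsto_aux hK (fun n => (hKmem n 1).mpr (H n).one_mem) tendsto_const_nhds
  · intro a ha
    obtain ⟨za, hza, hta⟩ := exists_seq_aux hK ha
    exact mem_of_tendsto_aux hK (fun n => (hKmem n _).mpr (inv_mem ((hKmem n _).mp (hza n))))
      hta.inv
  · intro a ha g
    obtain ⟨za, hza, hta⟩ := exists_seq_aux hK ha
    exact mem_of_tendsto_aux hK
      (fun n => (hKmem n _).mpr ((hnorm n).conj_mem _ ((hKmem n _).mp (hza n)) g))
      (((tendsto_const_nhds.mul hta).mul tendsto_const_nhds))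
end

section
/- Let G be a topological group with a metric d inducing its topology, and let (V_n)_{n∈ℕ} be a descending sequence of open normal subgroups of G such that for all g,h ∈ G and all n, d(g,h) ≤ 2^{-n} if and only if gh^{-1} ∈ V_n. Then for any two compact subgroups R and S of G and any n ∈ ℕ: the Hausdorff distance between (the underlying sets of) R and S is at most 2^{-n} if and only if R·V_n = S·V_n as subsets of G (where A·B = {ab : a ∈ A, b ∈ B}). -/
open Pointwise

/-- If `(Vₙ)` is a descending sequence of open normal subgroups of a metrized topological group
`G` with `dist g h ≤ 2⁻ⁿ ↔ g·h⁻¹ ∈ Vₙ`, then for compact subgroups `R, S` of `G` the Hausdorff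
distance between them is at most `2⁻ⁿ` iff `R·Vₙ = S·Vₙ` as subsets of `G`. -/
theorem hausdorffDist_le_iff_mul_eq
    (G : Type*) [Group G] [MetricSpace G] [IsTopologicalGroup G]
    (V : ℕ → Subgroup G)
    (hopen : ∀ n, IsOpen ((V n : Set G)))
    (hnormal : ∀ n, (V n).Normal)
    (hdesc : ∀ n, V (n + 1) ≤ V n)
    (hd : ∀ g h : G, ∀ n : ℕ, dist g h ≤ (2 : ℝ) ^ (-(n : ℤ)) ↔ g * h⁻¹ ∈ V n)
    (R S : Subgroup G) (hR : IsCompact (R : Set G)) (hS : IsCompact (S : Set G)) (n : ℕ) :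
    Metric.hausdorffDist (R : Set G) (S : Set G) ≤ (2 : ℝ) ^ (-(n : ℤ)) ↔
      (R : Set G) * (V n : Set G) = (S : Set G) * (V n : Set G) := by
  have hRne : (R : Set G).Nonempty := ⟨1, R.one_mem⟩
  have hSne : (S : Set G).Nonempty := ⟨1, S.one_mem⟩
  have hne : EMetric.hausdorffEdist (R : Set G) (S : Set G) ≠ ⊤ :=
    Metric.hausdorffEdist_ne_top_of_nonempty_of_bounded hRne hSne hR.isBounded hS.isBounded
  constructor
  · intro h
    -- key: from the Hausdorff bound, each element of one group is in the other times Vₙ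
    have key : ∀ (A B : Subgroup G), IsCompact (B : Set G) →
        (∀ x ∈ (A : Set G), Metric.infDist x (B : Set G) ≤ (2 : ℝ) ^ (-(n : ℤ))) →
        (A : Set G) * (V n : Set G) ⊆ (B : Set G) * (V n : Set G) := by
      intro A B hB hinf x hx
      obtain ⟨a, ha, v, hv, rfl⟩ := hx
      obtain ⟨b, hb, hdist⟩ := hB.exists_infDist_eq_dist ⟨1, B.one_mem⟩ a
      have : dist a b ≤ (2 : ℝ) ^ (-(n : ℤ)) := by
        rw [← hdist]; exact hinf a ha
      have hab : a * b⁻¹ ∈ V n := (hd a b n).1 this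
      refine ⟨b, hb, b⁻¹ * a * v, ?_, by group⟩
      have hc : b⁻¹ * (a * b⁻¹) * b⁻¹⁻¹ ∈ V n := (hnormal n).conj_mem _ hab b⁻¹
      have h2 : b⁻¹ * a ∈ V n := by
        have e : b⁻¹ * (a * b⁻¹) * b⁻¹⁻¹ = b⁻¹ * a := by group
        rwa [e] at hc
      exact (V n).mul_mem h2 hv
    have h1 : ∀ x ∈ (R : Set G), Metric.infDist x (S : Set G) ≤ (2 : ℝ) ^ (-(n : ℤ)) :=
      fun x hx => le_trans (Metric.infDist_le_hausdorffDist_of_mem hx hne) h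
    have h2 : ∀ x ∈ (S : Set G), Metric.infDist x (R : Set G) ≤ (2 : ℝ) ^ (-(n : ℤ)) := by
      intro x hx
      refine le_trans ?_ h
      rw [Metric.hausdorffDist_comm]
      exact Metric.infDist_le_hausdorffDist_of_mem hx (by rwa [EMetric.hausdorffEdist_comm])
    exact le_antisymm (key R S hS h1) (key S R hR h2)
  · intro h
    have key : ∀ (A B : Subgroup G),
        (A : Set G) * (V n : Set G) ⊆ (B : Set G) * (V n : Set G) →
        ∀ x ∈ (A : Set G), Metric.infDist x (B : Set G) ≤ (2 : ℝ) ^ (-(n : ℤ)) := by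
      intro A B hsub x hx
      have : x ∈ (B : Set G) * (V n : Set G) :=
        hsub ⟨x, hx, 1, (V n).one_mem, mul_one x⟩
      obtain ⟨b, hb, v, hv, rfl⟩ := this
      have hxv : b * v * b⁻¹ ∈ V n := by
        have : b * v * b⁻¹ = b * v * b⁻¹ := rfl
        exact (hnormal n).conj_mem _ hv b
      have : dist (b * v) b ≤ (2 : ℝ) ^ (-(n : ℤ)) := (hd _ _ n).2 hxv
      exact le_trans (Metric.infDist_le_dist_of_mem hb) this
    refine Metric.hausdorffDist_le_of_infDist (by positivity) ?_ ?_
    · exact key R S (le_of_eq h)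
    · exact key S R (ge_of_eq h)
end

section
/- Let G be a profinite group, i.e., a compact Hausdorff totally disconnected topological group. Call a set F of open normal subgroups of G a filter if G ∈ F, F is closed under intersection (L, L' ∈ F implies L ∩ L' ∈ F), and F is upward closed among open normal subgroups (L ∈ F, L ≤ L' with L' an open normal subgroup implies L' ∈ F). Then the map Φ sending a closed normal subgroup R of G to the set Φ(R) = {L : L an open normal subgroup of G with R ≤ L} is a bijection from the set of closed normal subgroups of G onto the set of filters of open normal subgroups of G, and its inverse sends a filter F to the intersection ⋂F. -/
/-- A set `F` of subgroups of a topological group `G` is a filter of open normal subgroups if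
all its members are open normal, `G ∈ F`, `F` is closed under intersections, and `F` is upward
closed among open normal subgroups. -/
def IsOpenNormalFilter (G : Type*) [Group G] [TopologicalSpace G]
    (F : Set (Subgroup G)) : Prop :=
  (∀ L ∈ F, IsOpen (L : Set G) ∧ L.Normal) ∧
  (⊤ : Subgroup G) ∈ F ∧
  (∀ L L' : Subgroup G, L ∈ F → L' ∈ F → L ⊓ L' ∈ F) ∧
  (∀ L L' : Subgroup G, L ∈ F → IsOpen (L' : Set G) → L'.Normal → L ≤ L' → L' ∈ F)

open scoped Pointwise

private lemma key_sep {G : Type*} [Group G] [TopologicalSpace G] [IsTopologicalGroup G]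
    [CompactSpace G] [T2Space G] [TotallyDisconnectedSpace G]
    (R : Subgroup G) (hRc : IsClosed (R : Set G)) (hRn : R.Normal) {x : G} (hx : x ∉ R) :
    ∃ L : Subgroup G, IsOpen (L : Set G) ∧ L.Normal ∧ R ≤ L ∧ x ∉ L := by
  have hKc : IsCompact (R : Set G) := hRc.isCompact
  have hU : IsOpen ({x}ᶜ : Set G) := isClosed_singleton.isOpen_compl
  have hRU : (R : Set G) ⊆ {x}ᶜ := fun y hy hxy =>
    hx (by simpa [Set.mem_singleton_iff.mp hxy] using hy)
  obtain ⟨V, hV, hRV⟩ := compact_open_separated_mul_right hKc hU hRU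
  obtain ⟨C, ⟨h1C, hCclopen⟩, hCV⟩ := (nhds_basis_clopen (1 : G)).mem_iff.mp hV
  obtain ⟨N, hN⟩ := IsTopologicalGroup.exist_openNormalSubgroup_sub_clopen_nhds_of_one hCclopen h1C
  haveI := hRn
  haveI := N.isNormal'
  refine ⟨R ⊔ N.toSubgroup, ?_, ?_, le_sup_left, ?_⟩
  · exact Subgroup.isOpen_mono (le_sup_right : N.toSubgroup ≤ R ⊔ N.toSubgroup) N.isOpen
  · infer_instance
  · intro hxL
    rw [← SetLike.mem_coe, Subgroup.mul_normal] at hxL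
    obtain ⟨r, hr, n, hn, rfl⟩ := hxL
    exact hRV (Set.mul_mem_mul hr (hCV (hN hn))) rfl

private lemma key_eq {G : Type*} [Group G] [TopologicalSpace G] [IsTopologicalGroup G]
    [CompactSpace G] [T2Space G] [TotallyDisconnectedSpace G]
    (R : Subgroup G) (hRc : IsClosed (R : Set G)) (hRn : R.Normal) :
    sInf {L : Subgroup G | IsOpen (L : Set G) ∧ L.Normal ∧ R ≤ L} = R := by
  apply le_antisymm
  · intro x hx
    by_contra hxR
    obtain ⟨L, hLo, hLn, hRL, hxL⟩ := key_sep R hRc hRn hxR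
    exact hxL (Subgroup.mem_sInf.mp hx L ⟨hLo, hLn, hRL⟩)
  · exact le_sInf fun L hL => hL.2.2

/-- For a profinite group `G`, the map `R ↦ {L open normal : R ≤ L}` is a bijection from closed
normal subgroups of `G` onto filters of open normal subgroups of `G`, with inverse `F ↦ ⋂ F`. -/
theorem closed_normal_subgroups_filter_bijection
    (G : Type*) [Group G] [TopologicalSpace G] [IsTopologicalGroup G]
    [CompactSpace G] [T2Space G] [TotallyDisconnectedSpace G] :
    (∀ R : Subgroup G, IsClosed (R : Set G) → R.Normal →
        IsOpenNormalFilter G {L : Subgroup G | IsOpen (L : Set G) ∧ L.Normal ∧ R ≤ L}) ∧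
    (∀ R S : Subgroup G, IsClosed (R : Set G) → R.Normal → IsClosed (S : Set G) → S.Normal →
        {L : Subgroup G | IsOpen (L : Set G) ∧ L.Normal ∧ R ≤ L} =
          {L : Subgroup G | IsOpen (L : Set G) ∧ L.Normal ∧ S ≤ L} → R = S) ∧
    (∀ F : Set (Subgroup G), IsOpenNormalFilter G F →
        IsClosed ((sInf F : Subgroup G) : Set G) ∧ (sInf F).Normal ∧
        {L : Subgroup G | IsOpen (L : Set G) ∧ L.Normal ∧ sInf F ≤ L} = F) := by

  refine ⟨?_, ?_, ?_⟩
  · -- Φ(R) is a filter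
    intro R _ _
    refine ⟨fun L hL => ⟨hL.1, hL.2.1⟩, ⟨isOpen_univ, inferInstance, le_top⟩, ?_, ?_⟩
    · rintro L L' ⟨hLo, hLn, hRL⟩ ⟨hL'o, hL'n, hRL'⟩
      exact ⟨by simpa using hLo.inter hL'o, by haveI := hLn; haveI := hL'n; infer_instance,
        le_inf hRL hRL'⟩
    · rintro L L' ⟨_, _, hRL⟩ hL'o hL'n hLL'
      exact ⟨hL'o, hL'n, hRL.trans hLL'⟩
  · -- injectivity
    intro R S hRc hRn hSc hSn h
    rw [← key_eq R hRc hRn, ← key_eq S hSc hSn, h]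
  · -- surjectivity
    rintro F ⟨h1, h2, h3, h4⟩
    have hclosed : ∀ L ∈ F, IsClosed (L : Set G) := fun L hL =>
      Subgroup.isClosed_of_isOpen L (h1 L hL).1
    have hInfClosed : IsClosed ((sInf F : Subgroup G) : Set G) := by
      rw [Subgroup.coe_sInf]
      exact isClosed_biInter hclosed
    have hInfNormal : (sInf F).Normal := by
      constructor
      intro n hn g
      rw [Subgroup.mem_sInf] at hn ⊢
      intro L hL
      haveI := (h1 L hL).2
      exact Subgroup.Normal.conj_mem ‹L.Normal› n (hn L hL) g
    refine ⟨hInfClosed, hInfNormal, ?_⟩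
    ext L
    simp only [Set.mem_setOf_eq]
    constructor
    · rintro ⟨hLo, hLn, hle⟩
      -- compactness: finitely many members of F already intersect inside L
      have hLcompl : IsCompact ((L : Set G)ᶜ) := hLo.isClosed_compl.isCompact
      have hcover : (L : Set G)ᶜ ⊆ ⋃ i : F, ((i : Subgroup G) : Set G)ᶜ := by
        intro x hx
        have hxInf : x ∉ sInf F := fun h => hx (hle h)
        rw [Subgroup.mem_sInf] at hxInf
        push_neg at hxInf
        obtain ⟨K, hKF, hxK⟩ := hxInf
        exact Set.mem_iUnion.mpr ⟨⟨K, hKF⟩, hxK⟩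
      obtain ⟨t, ht⟩ := hLcompl.elim_finite_subcover
        (fun i : F => ((i : Subgroup G) : Set G)ᶜ)
        (fun i => (hclosed i i.2).isOpen_compl) hcover
      classical
      have hMFgen : ∀ s : Finset F, s.inf (fun i => (i : Subgroup G)) ∈ F := by
        intro s
        induction s using Finset.induction_on with
        | empty => simpa using h2
        | insert _ _ h ih =>
          rw [Finset.inf_insert]
          exact h3 _ _ (Subtype.coe_prop _) ih
      set M : Subgroup G := t.inf (fun i => (i : Subgroup G)) with hM
      have hMF : M ∈ F := hMFgen t
      have hML : M ≤ L := by
        intro x hxM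
        by_contra hxL
        obtain ⟨i, hit, hxi⟩ := Set.mem_iUnion₂.mp (ht hxL)
        exact hxi ((Finset.inf_le hit : M ≤ (i : Subgroup G)) hxM)
      exact h4 M L hMF hLo hLn hML
    · intro hL
      exact ⟨(h1 L hL).1, (h1 L hL).2, sInf_le hL⟩
end

section
/- Let X be a Polish space (separable completely metrizable topological space) and let E be an equivalence relation on X that is closed as a subset of X × X. Then E is smooth: there exists a Borel measurable function f : X → ℝ such that for all x, y ∈ X, x E y if and only if f(x) = f(y). -/
open MeasureTheory Set

section Aux

variable {X : Type*} [TopologicalSpace X] [PolishSpace X] [MeasurableSpace X] [BorelSpace X]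
  {E : X → X → Prop}

/-- The saturation of a set under a relation. -/
private def mysat (E : X → X → Prop) (A : Set X) : Set X := {x | ∃ y ∈ A, E x y}

private lemma mysat_analytic (hclosed : IsClosed {p : X × X | E p.1 p.2})
    {A : Set X} (hA : AnalyticSet A) : AnalyticSet (mysat E A) := by
  have h1 : mysat E A = Prod.fst '' ({p : X × X | E p.1 p.2} ∩ Prod.snd ⁻¹' A) := by
    ext x
    constructor
    · rintro ⟨y, hyA, hxy⟩; exact ⟨(x, y), ⟨hxy, hyA⟩, rfl⟩
    · rintro ⟨⟨a, c⟩, ⟨hab, hbA⟩, rfl⟩; exact ⟨c, hbA, hab⟩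
  rw [h1]
  have hEa : AnalyticSet {p : X × X | E p.1 p.2} := hclosed.measurableSet.analyticSet
  have hpre : AnalyticSet (Prod.snd ⁻¹' A : Set (X × X)) := hA.preimage continuous_snd
  have hint : AnalyticSet ({p : X × X | E p.1 p.2} ∩ Prod.snd ⁻¹' A) := by
    have h2 := AnalyticSet.iInter (ι := Bool)
      (s := fun b => bif b then {p : X × X | E p.1 p.2} else Prod.snd ⁻¹' A)
      (by rintro (_ | _) <;> simpa)
    have h3 : (⋂ b : Bool, bif b then {p : X × X | E p.1 p.2} else Prod.snd ⁻¹' A)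
        = {p : X × X | E p.1 p.2} ∩ Prod.snd ⁻¹' A := by
      ext p; simp [Bool.forall_bool, and_comm]
    rwa [h3] at h2
  exact hint.image_of_continuous continuous_fst

/-- Iterated Lusin separation: an analytic set disjoint from an invariant analytic set can be
separated by an invariant Borel set. -/
private lemma invariant_sep (hE : Equivalence E) (hclosed : IsClosed {p : X × X | E p.1 p.2})
    {A C : Set X} (hA : AnalyticSet A) (hC : AnalyticSet C)
    (hCinv : ∀ x y, E x y → x ∈ C → y ∈ C) (hd : Disjoint A C) :
    ∃ B : Set X, MeasurableSet B ∧ A ⊆ B ∧ Disjoint B C ∧ ∀ x y, E x y → x ∈ B → y ∈ B := by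
  classical
  have hsatd : ∀ u : Set X, Disjoint u C → Disjoint (mysat E u) C := by
    intro u hu
    rw [Set.disjoint_left]
    rintro x ⟨y, hyu, hxy⟩ hxC
    exact Set.disjoint_left.1 hu hyu (hCinv x y hxy hxC)
  have step : ∀ u : Set X, AnalyticSet u → Disjoint u C →
      ∃ v : Set X, u ⊆ v ∧ Disjoint v C ∧ MeasurableSet v := by
    intro u hu hud
    obtain ⟨v, h1, h2, h3⟩ := hu.measurablySeparable hC hud
    exact ⟨v, h1, h2.symm, h3⟩
  let next : Set X → Set X := fun v =>
    if h : AnalyticSet (mysat E v) ∧ Disjoint (mysat E v) C then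
      (step _ h.1 h.2).choose else ∅
  let u : ℕ → Set X := fun n => Nat.rec ((step A hA hd).choose) (fun _ v => next v) n
  have hu0 : u 0 = (step A hA hd).choose := rfl
  have husucc : ∀ n, u (n + 1) = next (u n) := fun n => rfl
  have hnext : ∀ v : Set X, MeasurableSet v → Disjoint v C →
      mysat E v ⊆ next v ∧ Disjoint (next v) C ∧ MeasurableSet (next v) := by
    intro v hv hvd
    have h : AnalyticSet (mysat E v) ∧ Disjoint (mysat E v) C :=
      ⟨mysat_analytic hclosed hv.analyticSet, hsatd v hvd⟩
    have h2 := (step _ h.1 h.2).choose_spec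
    simpa only [next, dif_pos h] using h2
  have hbase := (step A hA hd).choose_spec
  have key : ∀ n, MeasurableSet (u n) ∧ Disjoint (u n) C := by
    intro n
    induction n with
    | zero => rw [hu0]; exact ⟨hbase.2.2, hbase.2.1⟩
    | succ n ih =>
      rw [husucc]
      exact ⟨(hnext _ ih.1 ih.2).2.2, (hnext _ ih.1 ih.2).2.1⟩
  refine ⟨⋃ n, u n, MeasurableSet.iUnion fun n => (key n).1, ?_, ?_, ?_⟩
  · rw [← hu0] at hbase
    exact hbase.1.trans (Set.subset_iUnion u 0)
  · exact Set.disjoint_iUnion_left.2 fun n => (key n).2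
  · rintro x y hxy hx
    obtain ⟨n, hn⟩ := Set.mem_iUnion.1 hx
    have h1 : y ∈ mysat E (u n) := ⟨x, hn, hE.symm hxy⟩
    have h2 : y ∈ u (n + 1) := by
      rw [husucc]
      exact (hnext _ (key n).1 (key n).2).1 h1
    exact Set.mem_iUnion.2 ⟨n + 1, h2⟩

end Aux

/-- A closed equivalence relation on a Polish space is smooth: there is a Borel measurable
real-valued function whose fibers are exactly the equivalence classes. -/
theorem closed_equivalence_relation_smooth
    (X : Type*) [TopologicalSpace X] [PolishSpace X] [MeasurableSpace X] [BorelSpace X]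
    (E : X → X → Prop) (hE : Equivalence E)
    (hclosed : IsClosed {p : X × X | E p.1 p.2}) :
    ∃ f : X → ℝ, Measurable f ∧ ∀ x y : X, E x y ↔ f x = f y := by
  classical
  obtain ⟨b, hbc, -, hb⟩ := TopologicalSpace.exists_countable_basis X
  -- the countable set of pairs of basic open sets whose product misses E
  set S : Set (Set X × Set X) :=
    {p | p.1 ∈ b ∧ p.2 ∈ b ∧ ∀ x ∈ p.1, ∀ y ∈ p.2, ¬ E x y} with hS
  have hScount : S.Countable := by
    refine (hbc.prod hbc).mono ?_
    rintro ⟨U, V⟩ ⟨hU, hV, -⟩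
    exact ⟨hU, hV⟩
  haveI : Countable S := hScount.to_subtype
  -- saturations of the two open sets in a pair from S are disjoint invariant analytic sets
  have hsat_an : ∀ U : Set X, IsOpen U → AnalyticSet (mysat E U) := fun U hU =>
    mysat_analytic hclosed hU.measurableSet.analyticSet
  have hsat_inv : ∀ U : Set X, ∀ x y, E x y → x ∈ mysat E U → y ∈ mysat E U := by
    rintro U x y hxy ⟨v, hvU, hxv⟩
    exact ⟨v, hvU, hE.trans (hE.symm hxy) hxv⟩
  have hsat_disj : ∀ p : S, Disjoint (mysat E (p.1).1) (mysat E (p.1).2) := by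
    rintro ⟨⟨U, V⟩, hU, hV, hUV⟩
    rw [Set.disjoint_left]
    rintro x ⟨u, huU, hxu⟩ ⟨v, hvV, hxv⟩
    exact hUV u huU v hvV (hE.trans (hE.symm hxu) hxv)
  -- choose invariant Borel separating sets
  have hchoice : ∀ p : S, ∃ B : Set X, MeasurableSet B ∧ mysat E (p.1).1 ⊆ B ∧
      Disjoint B (mysat E (p.1).2) ∧ ∀ x y, E x y → x ∈ B → y ∈ B := fun p =>
    invariant_sep hE hclosed (hsat_an _ (hb.isOpen p.2.1)) (hsat_an _ (hb.isOpen p.2.2.1))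
      (hsat_inv _) (hsat_disj p)
  choose B hBmeas hBsub hBdisj hBinv using hchoice
  -- encode membership in the B's as a function to a standard Borel space
  let g : X → (S → Bool) := fun x p => if x ∈ B p then true else false
  have hgmeas : Measurable g :=
    measurable_pi_lambda _ fun p => Measurable.ite (hBmeas p) measurable_const measurable_const
  have hg : ∀ x y : X, E x y ↔ g x = g y := by
    intro x y
    constructor
    · intro hxy
      funext p
      simp only [g]
      by_cases hx : x ∈ B p
      · rw [if_pos hx, if_pos (hBinv p x y hxy hx)]
      · rw [if_neg hx, if_neg fun hy => hx (hBinv p y x (hE.symm hxy) hy)]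
    · intro hgxy
      by_contra hne
      have hmem : (x, y) ∈ {p : X × X | E p.1 p.2}ᶜ := hne
      obtain ⟨t, ht, hxyt, htsub⟩ := (hb.prod hb).exists_subset_of_mem_open hmem
        hclosed.isOpen_compl
      obtain ⟨U, hU, V, hV, rfl⟩ := ht
      have hpS : (U, V) ∈ S := by
        refine ⟨hU, hV, fun u hu v hv huv => ?_⟩
        exact htsub (Set.mk_mem_prod hu hv) huv
      set p : S := ⟨(U, V), hpS⟩
      have hxB : x ∈ B p := hBsub p ⟨x, hxyt.1, hE.refl x⟩
      have hyB : y ∉ B p := Set.disjoint_right.1 (hBdisj p) ⟨y, hxyt.2, hE.refl y⟩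
      have := congrFun hgxy p
      simp only [g, if_pos hxB, if_neg hyB] at this
      exact Bool.noConfusion this
  obtain ⟨e, he⟩ := exists_measurableEmbedding_real (S → Bool)
  refine ⟨e ∘ g, he.measurable.comp hgmeas, fun x y => ?_⟩
  rw [hg x y]
  exact ⟨fun h => by rw [Function.comp_apply, Function.comp_apply, h],
    fun h => he.injective h⟩
end

section
/- Let Q be a compact metrizable topological group acting continuously on a Polish space X. Then the orbit equivalence relation of the action is smooth: there exists a Borel measurable function f : X → ℝ such that for all x, y ∈ X, f(x) = f(y) if and only if there exists q ∈ Q with q·x = y. -/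
open TopologicalSpace Metric MulAction Set

/-- The orbit equivalence relation of a continuous action of a compact metrizable topological
group on a Polish space is smooth: some Borel measurable real-valued function has the orbits as
its fibers. -/
theorem orbit_equivalence_relation_smooth
    (Q X : Type*) [Group Q] [TopologicalSpace Q] [IsTopologicalGroup Q]
    [CompactSpace Q] [TopologicalSpace.MetrizableSpace Q]
    [TopologicalSpace X] [PolishSpace X] [MeasurableSpace X] [BorelSpace X]
    [MulAction Q X] [ContinuousSMul Q X] :
    ∃ f : X → ℝ, Measurable f ∧ ∀ x y : X, f x = f y ↔ ∃ q : Q, q • x = y := by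
  letI := upgradeIsCompletelyMetrizable X
  letI : MeasurableSpace (NonemptyCompacts X) := borel _
  haveI : BorelSpace (NonemptyCompacts X) := ⟨rfl⟩
  haveI : StandardBorelSpace (NonemptyCompacts X) := inferInstance
  obtain ⟨g, hg⟩ := MeasureTheory.exists_measurableEmbedding_real (NonemptyCompacts X)
  have horb : ∀ x : X, IsCompact (orbit Q x) := fun x =>
    isCompact_range (continuous_id.smul continuous_const)
  let orb : X → NonemptyCompacts X := fun x => ⟨⟨orbit Q x, horb x⟩, nonempty_orbit x⟩
  have hcont : Continuous orb := by
    rw [Metric.continuous_iff]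
    intro x ε hε
    have hopen : IsOpen {p : Q × X | dist (p.1 • p.2) (p.1 • x) < ε / 2} :=
      isOpen_lt (by fun_prop) continuous_const
    have hsub : (Set.univ : Set Q) ×ˢ ({x} : Set X) ⊆
        {p : Q × X | dist (p.1 • p.2) (p.1 • x) < ε / 2} := by
      rintro ⟨q, y⟩ ⟨-, hy⟩
      simp only [mem_singleton_iff] at hy
      simp [hy, half_pos hε]
    obtain ⟨u, v, hu, hv, hQu, hxv, huv⟩ :=
      generalized_tube_lemma isCompact_univ isCompact_singleton hopen hsub
    obtain ⟨δ, hδ, hball⟩ := Metric.isOpen_iff.1 hv x (hxv rfl)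
    refine ⟨δ, hδ, fun y hy => ?_⟩
    have key : ∀ q : Q, dist (q • y) (q • x) ≤ ε / 2 := fun q =>
      le_of_lt (huv (show (q, y) ∈ u ×ˢ v from ⟨hQu trivial, hball hy⟩))
    have hd : hausdorffDist (orbit Q y : Set X) (orbit Q x) ≤ ε / 2 := by
      apply hausdorffDist_le_of_mem_dist (by linarith)
      · rintro a ⟨q, rfl⟩
        exact ⟨q • x, mem_orbit x q, key q⟩
      · rintro a ⟨q, rfl⟩
        exact ⟨q • y, mem_orbit y q, by rw [dist_comm]; exact key q⟩
    calc dist (orb y) (orb x) = hausdorffDist (orbit Q y : Set X) (orbit Q x) := rfl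
      _ ≤ ε / 2 := hd
      _ < ε := by linarith
  refine ⟨g ∘ orb, hg.measurable.comp hcont.measurable, fun x y => ?_⟩
  rw [Function.comp_apply, Function.comp_apply, hg.injective.eq_iff]
  constructor
  · intro h
    have h' : orbit Q x = orbit Q y := congrArg (fun s : TopologicalSpace.NonemptyCompacts X => (s : Set X)) h
    have hy : y ∈ orbit Q x := by rw [h']; exact mem_orbit_self y
    exact mem_orbit_iff.1 hy
  · rintro ⟨q, rfl⟩
    have h' : orbit Q x = orbit Q (q • x) := (orbit_smul q x).symm
    apply TopologicalSpace.NonemptyCompacts.ext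
    exact h'
end

section
/- There exist finitely generated, residually finite groups G and H that are not isomorphic as groups but whose profinite completions are isomorphic as topological groups. -/
/-- The finite-index normal subgroups of a group `G`. -/
def FiniteIndexNormal (G : Type*) [Group G] : Type _ :=
  {N : Subgroup G // N.Normal ∧ N.index ≠ 0}

instance {G : Type*} [Group G] (N : FiniteIndexNormal G) : N.1.Normal := N.2.1

/-- Each finite quotient carries the discrete topology. -/
instance {G : Type*} [Group G] (N : FiniteIndexNormal G) :
    TopologicalSpace (G ⧸ N.1) := ⊥

/-- The natural projection `G/N → G/M` for `N ≤ M`. -/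
def finiteQuotientMap {G : Type*} [Group G] {N M : FiniteIndexNormal G} (h : N.1 ≤ M.1) :
    G ⧸ N.1 →* G ⧸ M.1 :=
  QuotientGroup.map N.1 M.1 (MonoidHom.id G) (fun _ hg => h hg)

/-- The profinite completion of `G`: the subgroup of `∏_N G/N` (over all finite-index normal
subgroups `N`, each `G/N` discrete, product topology) consisting of compatible families. -/
def ProfiniteCompletion (G : Type*) [Group G] :
    Subgroup (∀ N : FiniteIndexNormal G, G ⧸ N.1) where
  carrier := {x | ∀ (N M : FiniteIndexNormal G) (h : N.1 ≤ M.1),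
    finiteQuotientMap h (x N) = x M}
  one_mem' := by intro N M h; simp
  mul_mem' := by
    intro x y hx hy N M h
    simp only [Pi.mul_apply, map_mul, hx N M h, hy N M h]
  inv_mem' := by
    intro x hx N M h
    simp only [Pi.inv_apply, map_inv, hx N M h]

/-- A group is residually finite if every nontrivial element avoids some finite-index normal
subgroup. -/
def ResiduallyFinite (G : Type*) [Group G] : Prop :=
  ∀ g : G, g ≠ 1 → ∃ N : Subgroup G, N.Normal ∧ N.index ≠ 0 ∧ g ∉ N



/-- Semidirect product `ZMod 25 ⋊ ℤ` with `1 ∈ ℤ` acting by multiplication by the unit `u`. -/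
@[ext] structure SG (u : (ZMod 25)ˣ) : Type where
  a : ZMod 25
  m : ℤ
  deriving DecidableEq

namespace SG

variable {u : (ZMod 25)ˣ}

instance : Mul (SG u) := ⟨fun x y => ⟨x.a + (u ^ x.m : (ZMod 25)ˣ) * y.a, x.m + y.m⟩⟩
instance : One (SG u) := ⟨⟨0, 0⟩⟩
instance : Inv (SG u) := ⟨fun x => ⟨-((u ^ (-x.m) : (ZMod 25)ˣ) * x.a), -x.m⟩⟩

@[simp] lemma mul_a (x y : SG u) : (x * y).a = x.a + (u ^ x.m : (ZMod 25)ˣ) * y.a := rfl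
@[simp] lemma mul_m (x y : SG u) : (x * y).m = x.m + y.m := rfl
@[simp] lemma one_a : (1 : SG u).a = 0 := rfl
@[simp] lemma one_m : (1 : SG u).m = 0 := rfl
@[simp] lemma inv_a (x : SG u) : (x⁻¹).a = -((u ^ (-x.m) : (ZMod 25)ˣ) * x.a) := rfl
@[simp] lemma inv_m (x : SG u) : (x⁻¹).m = -x.m := rfl

instance : Group (SG u) :=
  Group.ofLeftAxioms
    (fun x y z => by ext <;> simp [zpow_add, Units.val_mul, mul_add] <;> ring)
    (fun x => by ext <;> simp)
    (fun x => by ext <;> simp [zpow_add, Units.val_mul])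

end SG

namespace SG

variable {u u' : (ZMod 25)ˣ}

/-- Projection to `ℤ` (written multiplicatively). -/
def projm : SG u →* Multiplicative ℤ where
  toFun x := Multiplicative.ofAdd x.m
  map_one' := rfl
  map_mul' x y := rfl

@[simp] lemma projm_apply (x : SG u) : (projm x : Multiplicative ℤ) = Multiplicative.ofAdd x.m := rfl

/-- the inclusion of `ZMod 25`. -/
def iota1 : Multiplicative (ZMod 25) →* SG u where
  toFun a := ⟨a.toAdd, 0⟩
  map_one' := by ext <;> simp
  map_mul' a b := by ext <;> simp

/-- the inclusion of `ℤ`. -/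
def iota2 : Multiplicative ℤ →* SG u where
  toFun n := ⟨0, n.toAdd⟩
  map_one' := by ext <;> simp
  map_mul' a b := by ext <;> simp

@[simp] lemma zpow_m (x : SG u) (k : ℤ) : (x ^ k).m = k * x.m := by
  have : (projm (x ^ k) : Multiplicative ℤ) = (projm x) ^ k := map_zpow projm x k
  simpa [mul_comm] using congrArg Multiplicative.toAdd this

@[simp] lemma pow_m (x : SG u) (k : ℕ) : (x ^ k).m = k * x.m := by
  have : (projm (x ^ k) : Multiplicative ℤ) = (projm x) ^ k := map_pow projm x k
  simpa [mul_comm] using congrArg Multiplicative.toAdd this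

lemma zpow_iota (n k : ℤ) : (⟨0, n⟩ : SG u) ^ k = ⟨0, k * n⟩ := by
  have h : (⟨0, n⟩ : SG u) = iota2 (Multiplicative.ofAdd n) := rfl
  rw [h, ← map_zpow]
  rfl

lemma pow_a0 (a : ZMod 25) (k : ℕ) : (⟨a, 0⟩ : SG u) ^ k = ⟨k * a, 0⟩ := by
  have h : (⟨a, 0⟩ : SG u) = iota1 (Multiplicative.ofAdd a) := rfl
  rw [h, ← map_pow]
  show (⟨(Multiplicative.ofAdd a ^ k).toAdd, 0⟩ : SG u) = _
  ext <;> simp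

/-- The subgroup `{(0, n) : c ∣ n}`. -/
def K (u : (ZMod 25)ˣ) (c : ℕ) : Subgroup (SG u) where
  carrier := {x | x.a = 0 ∧ (c : ℤ) ∣ x.m}
  one_mem' := ⟨rfl, dvd_zero _⟩
  mul_mem' := by
    rintro x y ⟨hx, hx'⟩ ⟨hy, hy'⟩
    exact ⟨by simp [hx, hy], by simpa using dvd_add hx' hy'⟩
  inv_mem' := by
    rintro x ⟨hx, hx'⟩
    exact ⟨by simp [hx], by simpa using hx'.neg_right⟩

@[simp] lemma mem_K {c : ℕ} {x : SG u} : x ∈ K u c ↔ x.a = 0 ∧ (c : ℤ) ∣ x.m := Iff.rfl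

/-- The subgroup `{(a, n) : c ∣ n}`. -/
def L (u : (ZMod 25)ˣ) (c : ℕ) : Subgroup (SG u) where
  carrier := {x | (c : ℤ) ∣ x.m}
  one_mem' := dvd_zero _
  mul_mem' := by
    rintro x y hx hy
    simpa using dvd_add hx hy
  inv_mem' := by
    rintro x hx
    simpa using hx.neg_right

@[simp] lemma mem_L {c : ℕ} {x : SG u} : x ∈ L u c ↔ (c : ℤ) ∣ x.m := Iff.rfl

lemma conj_formula (g x : SG u) :
    g * x * g⁻¹ = ⟨g.a + (u ^ g.m : (ZMod 25)ˣ) * x.a - ((u ^ x.m : (ZMod 25)ˣ) : ZMod 25) * g.a, x.m⟩ := by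
  have h : ((u ^ (g.m + x.m) : (ZMod 25)ˣ) : ZMod 25) * ((u ^ (-g.m) : (ZMod 25)ˣ) : ZMod 25)
      = ((u ^ x.m : (ZMod 25)ˣ) : ZMod 25) := by
    rw [← Units.val_mul, ← zpow_add]
    congr 2
    ring
  ext
  · show g.a + (u ^ g.m : (ZMod 25)ˣ) * x.a
        + ((u ^ (g.m + x.m) : (ZMod 25)ˣ) : ZMod 25) * (-(((u ^ (-(g.m)) : (ZMod 25)ˣ) : ZMod 25) * g.a)) = _
    calc g.a + (u ^ g.m : (ZMod 25)ˣ) * x.a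
        + ((u ^ (g.m + x.m) : (ZMod 25)ˣ) : ZMod 25) * (-(((u ^ (-(g.m)) : (ZMod 25)ˣ) : ZMod 25) * g.a))
        = g.a + (u ^ g.m : (ZMod 25)ˣ) * x.a
          - (((u ^ (g.m + x.m) : (ZMod 25)ˣ) : ZMod 25) * ((u ^ (-g.m) : (ZMod 25)ˣ) : ZMod 25)) * g.a := by
          ring
      _ = _ := by rw [h]
  · show g.m + x.m + -g.m = x.m
    ring

lemma L_normal (c : ℕ) : (L u c).Normal := by
  constructor
  intro x hx g
  simp only [mem_L] at hx ⊢
  rw [conj_formula]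
  exact hx

lemma K_normal {c : ℕ} (hc : u ^ (c : ℤ) = 1) : (K u c).Normal := by
  constructor
  rintro x ⟨hx, hx'⟩ g
  simp only [mem_K] at *
  rw [conj_formula]
  obtain ⟨k, hk⟩ := hx'
  refine ⟨?_, ⟨k, by simpa using hk⟩⟩
  have : (u ^ x.m : (ZMod 25)ˣ) = 1 := by
    rw [hk, zpow_mul, hc, one_zpow]
  simp [hx, this]

lemma inv_mul_same_a (a : ZMod 25) (m m' : ℤ) :
    (⟨a, m'⟩ : SG u)⁻¹ * ⟨a, m⟩ = ⟨0, m - m'⟩ := by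
  ext
  · show -(((u ^ (-m') : (ZMod 25)ˣ) : ZMod 25) * a) + ((u ^ (-m') : (ZMod 25)ˣ) : ZMod 25) * a = 0
    ring
  · show -m' + m = m - m'
    ring

lemma quotK_mk_eq {c : ℕ} (a : ZMod 25) (m m' : ℤ) (h : (c : ℤ) ∣ m - m') :
    (QuotientGroup.mk (⟨a, m'⟩ : SG u) : SG u ⧸ K u c) = QuotientGroup.mk ⟨a, m⟩ := by
  rw [QuotientGroup.eq]
  rw [inv_mul_same_a]
  exact ⟨rfl, h⟩

lemma finite_quotK (c : ℕ) (hc : c ≠ 0) : Finite (SG u ⧸ K u c) := by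
  haveI : NeZero c := ⟨hc⟩
  apply Finite.of_surjective
    (fun p : ZMod 25 × ZMod c => (QuotientGroup.mk ⟨p.1, (p.2.val : ℤ)⟩ : SG u ⧸ K u c))
  rintro q
  induction q using QuotientGroup.induction_on with
  | H x =>
    refine ⟨(x.a, (x.m : ZMod c)), ?_⟩
    apply quotK_mk_eq
    rw [ZMod.val_intCast (n := c) x.m]
    have hd : (c : ℤ) ∣ x.m - x.m % (c : ℤ) := Int.dvd_self_sub_of_emod_eq rfl
    omega

lemma quotL_mk_eq {c : ℕ} (a a' : ZMod 25) (m m' : ℤ) (h : (c : ℤ) ∣ m - m') :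
    (QuotientGroup.mk (⟨a', m'⟩ : SG u) : SG u ⧸ L u c) = QuotientGroup.mk ⟨a, m⟩ := by
  rw [QuotientGroup.eq]
  refine mem_L.mpr ?_
  show (c : ℤ) ∣ -m' + m
  have e : -m' + m = m - m' := by ring
  rw [e]; exact h

lemma finite_quotL (c : ℕ) (hc : c ≠ 0) : Finite (SG u ⧸ L u c) := by
  haveI : NeZero c := ⟨hc⟩
  apply Finite.of_surjective
    (fun t : ZMod c => (QuotientGroup.mk ⟨0, (t.val : ℤ)⟩ : SG u ⧸ L u c))
  rintro q
  induction q using QuotientGroup.induction_on with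
  | H x =>
    refine ⟨(x.m : ZMod c), ?_⟩
    apply quotL_mk_eq
    rw [ZMod.val_intCast (n := c) x.m]
    have hd : (c : ℤ) ∣ x.m - x.m % (c : ℤ) := Int.dvd_self_sub_of_emod_eq rfl
    omega

lemma finiteQuotientMap_mk {G : Type*} [Group G] {N M : FiniteIndexNormal G} (h : N.1 ≤ M.1)
    (g : G) : finiteQuotientMap h (QuotientGroup.mk g) = QuotientGroup.mk g := rfl

section FIN

variable (u : (ZMod 25)ˣ)

lemma u_zpow_c (hu : u ^ (5 : ℕ) = 1) {c : ℕ} (h5 : 5 ∣ c) : u ^ (c : ℤ) = 1 := by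
  obtain ⟨k, rfl⟩ := h5
  have : ((5 * k : ℕ) : ℤ) = 5 * (k : ℤ) := by push_cast; ring
  rw [this, zpow_mul]
  norm_cast
  rw [hu]
  exact one_pow k

/-- The bundled finite-index normal subgroup `K u c`. -/
def KFIN (hu : u ^ (5 : ℕ) = 1) (c : ℕ) (h5 : 5 ∣ c) (h0 : c ≠ 0) : FiniteIndexNormal (SG u) :=
  ⟨K u c, K_normal (u_zpow_c u hu h5),
    haveI := finite_quotK (u := u) c h0
    Subgroup.index_ne_zero_of_finite⟩

lemma KFIN_le (hu : u ^ (5 : ℕ) = 1) (M : FiniteIndexNormal (SG u)) {c : ℕ} (hdvd : (5 * M.1.index : ℤ) ∣ (c : ℤ))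
    (h5 : 5 ∣ c) (h0 : c ≠ 0) : (KFIN u hu c h5 h0).1 ≤ M.1 := by
  rintro x ⟨hxa, n, hn⟩
  obtain ⟨j, hj⟩ := hdvd
  haveI : M.1.FiniteIndex := ⟨M.2.2⟩
  haveI : M.1.Normal := M.2.1
  have hg : (⟨0, (5 : ℤ)⟩ : SG u) ^ M.1.index ∈ M.1 := Subgroup.pow_index_mem M.1 _
  have hpow : (⟨0, (5 : ℤ)⟩ : SG u) ^ M.1.index = ⟨0, (M.1.index : ℤ) * 5⟩ := by
    rw [← zpow_natCast, zpow_iota]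
  rw [hpow] at hg
  have hx : x = (⟨0, (M.1.index : ℤ) * 5⟩ : SG u) ^ (j * n) := by
    rw [zpow_iota]
    ext
    · exact hxa
    · show x.m = j * n * ((M.1.index : ℤ) * 5)
      rw [hn, hj]
      ring
  rw [hx]
  exact Subgroup.zpow_mem M.1 hg _

end FIN

section theta

variable {u u' : (ZMod 25)ˣ}

/-- For `u'^w = u`, `(a, m) ↦ (a, w*m)` is a homomorphism `SG u →* SG u'`. -/
def theta (w : ℤ) (hw : u' ^ w = u) : SG u →* SG u' where
  toFun x := ⟨x.a, w * x.m⟩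
  map_one' := by ext <;> simp
  map_mul' x y := by
    ext
    · show x.a + ((u ^ x.m : (ZMod 25)ˣ) : ZMod 25) * y.a
          = x.a + ((u' ^ (w * x.m) : (ZMod 25)ˣ) : ZMod 25) * y.a
      rw [zpow_mul, hw]
    · show w * (x.m + y.m) = w * x.m + w * y.m
      ring

@[simp] lemma theta_apply (w : ℤ) (hw : u' ^ w = u) (x : SG u) :
    theta w hw x = ⟨x.a, w * x.m⟩ := rfl

/-- The induced map on quotients by `K`. -/
def liftTheta (hu : u ^ (5 : ℕ) = 1) (hu' : u' ^ (5 : ℕ) = 1) (w : ℤ) (hw : u' ^ w = u) (c : ℕ) (h5 : 5 ∣ c) (h0 : c ≠ 0) :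
    SG u ⧸ (KFIN u hu c h5 h0).1 →* SG u' ⧸ (KFIN u' hu' c h5 h0).1 :=
  QuotientGroup.lift (KFIN u hu c h5 h0).1
    ((QuotientGroup.mk' (KFIN u' hu' c h5 h0).1).comp (theta w hw)) (by
    rintro y ⟨hy, n, hn⟩
    show (QuotientGroup.mk (theta w hw y) : SG u' ⧸ (KFIN u' hu' c h5 h0).1) = 1
    rw [QuotientGroup.eq_one_iff]
    exact ⟨hy, ⟨w * n, by simp only [theta_apply]; rw [hn]; ring⟩⟩)

@[simp] lemma liftTheta_mk (hu : u ^ (5 : ℕ) = 1) (hu' : u' ^ (5 : ℕ) = 1) (w : ℤ) (hw : u' ^ w = u) (c : ℕ) (h5 : 5 ∣ c) (h0 : c ≠ 0)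
    (x : SG u) :
    liftTheta hu hu' w hw c h5 h0 (QuotientGroup.mk x) = QuotientGroup.mk ⟨x.a, w * x.m⟩ :=
  rfl

end theta

section wfam

/-- The 5-part of `c`. -/
private def Pp (c : ℕ) : ℕ := 5 ^ (c.factorization 5)
/-- The non-5-part of `c`. -/
private def Qp (c : ℕ) : ℕ := c / Pp c

private lemma five_prime : Nat.Prime 5 := by norm_num

private lemma coprimePQ (c : ℕ) : Nat.Coprime (Pp c) (Qp c) := by
  rcases eq_or_ne c 0 with rfl | hc
  · simp [Pp, Qp]
  · exact Nat.Coprime.pow_left _ (Nat.coprime_ordCompl five_prime hc)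

private lemma PQ_eq (c : ℕ) (hc : c ≠ 0) : Pp c * Qp c = c := by
  exact Nat.ordProj_mul_ordCompl_eq_self c 5

/-- The CRT family: `wfun c ≡ 3 mod 5^(v₅ c)` and `≡ 1 mod (c / 5^(v₅ c))`. -/
noncomputable def wfun (c : ℕ) : ℤ := ((Nat.chineseRemainder (coprimePQ c) 3 1 : ℕ) : ℤ)

private lemma wfun_mod_P (c : ℕ) : ((Pp c : ℕ) : ℤ) ∣ wfun c - 3 := by
  have h := (Nat.chineseRemainder (coprimePQ c) 3 1).2.1
  have h2 : ((Pp c : ℕ) : ℤ) ∣ (3 : ℤ) - ((Nat.chineseRemainder (coprimePQ c) 3 1 : ℕ) : ℤ) := by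
    exact_mod_cast h.dvd
  have h3 := dvd_neg.mpr h2
  rw [neg_sub] at h3
  exact h3

private lemma wfun_mod_Q (c : ℕ) : ((Qp c : ℕ) : ℤ) ∣ wfun c - 1 := by
  have h := (Nat.chineseRemainder (coprimePQ c) 3 1).2.2
  have h2 : ((Qp c : ℕ) : ℤ) ∣ (1 : ℤ) - ((Nat.chineseRemainder (coprimePQ c) 3 1 : ℕ) : ℤ) := by
    exact_mod_cast h.dvd
  have h3 := dvd_neg.mpr h2
  rw [neg_sub] at h3
  exact h3

lemma wfun_mod5 {c : ℕ} (h5 : 5 ∣ c) (hc : c ≠ 0) : (5 : ℤ) ∣ wfun c - 3 := by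
  have hv : 0 < c.factorization 5 :=
    Nat.Prime.factorization_pos_of_dvd five_prime hc h5
  have h5P : (5 : ℤ) ∣ ((Pp c : ℕ) : ℤ) := by
    have : (5 : ℕ) ∣ Pp c := dvd_pow_self 5 hv.ne'
    exact_mod_cast Int.natCast_dvd_natCast.mpr this
  exact h5P.trans (wfun_mod_P c)

lemma wfun_compat {c d : ℕ} (hcd : c ∣ d) (hc : c ≠ 0) (hd : d ≠ 0) :
    (c : ℤ) ∣ wfun d - wfun c := by
  have hP : ((Pp c : ℕ) : ℤ) ∣ wfun d - wfun c := by
    have h1 : ((Pp c : ℕ) : ℤ) ∣ wfun d - 3 := by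
      have hh : (Pp c : ℕ) ∣ Pp d := Nat.ordProj_dvd_ordProj_of_dvd hd hcd 5
      exact (Int.natCast_dvd_natCast.mpr hh).trans (wfun_mod_P d)
    have h2 := wfun_mod_P c
    have : wfun d - wfun c = (wfun d - 3) - (wfun c - 3) := by ring
    rw [this]
    exact dvd_sub h1 h2
  have hQ : ((Qp c : ℕ) : ℤ) ∣ wfun d - wfun c := by
    have h1 : ((Qp c : ℕ) : ℤ) ∣ wfun d - 1 := by
      have hh : (Qp c : ℕ) ∣ Qp d := Nat.ordCompl_dvd_ordCompl_of_dvd hcd 5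
      exact (Int.natCast_dvd_natCast.mpr hh).trans (wfun_mod_Q d)
    have h2 := wfun_mod_Q c
    have : wfun d - wfun c = (wfun d - 1) - (wfun c - 1) := by ring
    rw [this]
    exact dvd_sub h1 h2
  have hco : IsCoprime ((Pp c : ℕ) : ℤ) ((Qp c : ℕ) : ℤ) :=
    Nat.isCoprime_iff_coprime.mpr (coprimePQ c)
  have := hco.mul_dvd hP hQ
  rw [← Int.natCast_mul, PQ_eq c hc] at this
  exact this

lemma wfun_coprime {c : ℕ} (hc : c ≠ 0) : IsCoprime (wfun c) (c : ℤ) := by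
  have hP : IsCoprime (wfun c) ((Pp c : ℕ) : ℤ) := by
    obtain ⟨s, hs⟩ := wfun_mod_P c
    have h3 : IsCoprime (3 : ℤ) ((Pp c : ℕ) : ℤ) := by
      have h35 : IsCoprime (3 : ℤ) (5 : ℤ) := ⟨2, -1, by ring⟩
      have hPp : ((Pp c : ℕ) : ℤ) = 5 ^ (c.factorization 5) := by
        simp [Pp]
      rw [hPp]
      exact h35.pow_right
    have he : wfun c = 3 + ((Pp c : ℕ) : ℤ) * s := by linarith [hs]
    rw [he]
    exact h3.add_mul_left_left s
  have hQ : IsCoprime (wfun c) ((Qp c : ℕ) : ℤ) := by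
    obtain ⟨s, hs⟩ := wfun_mod_Q c
    have h1 : IsCoprime (1 : ℤ) ((Qp c : ℕ) : ℤ) := isCoprime_one_left
    have he : wfun c = 1 + ((Qp c : ℕ) : ℤ) * s := by linarith [hs]
    rw [he]
    exact h1.add_mul_left_left s
  have := hP.mul_right hQ
  rw [← Int.natCast_mul, PQ_eq c hc] at this
  exact this

/-- The inverse family. -/
noncomputable def wfun' (c : ℕ) : ℤ :=
  if hc : c = 0 then 0 else (wfun_coprime hc).choose

lemma wfun_mul_wfun' {c : ℕ} (hc : c ≠ 0) : (c : ℤ) ∣ wfun c * wfun' c - 1 := by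
  rw [wfun', dif_neg hc]
  obtain ⟨b, hb⟩ := (wfun_coprime hc).choose_spec
  exact ⟨-b, by linarith [hb]⟩

lemma wfun'_mod5 {c : ℕ} (h5 : 5 ∣ c) (hc : c ≠ 0) : (5 : ℤ) ∣ wfun' c - 2 := by
  have h1 : (5 : ℤ) ∣ wfun c * wfun' c - 1 := by
    have := wfun_mul_wfun' hc
    have h5' : (5 : ℤ) ∣ (c : ℤ) := by exact_mod_cast Int.natCast_dvd_natCast.mpr h5
    exact h5'.trans this
  have h2 : (5 : ℤ) ∣ (wfun c - 3) * wfun' c := (wfun_mod5 h5 hc).mul_right _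
  have h3 : (5 : ℤ) ∣ 3 * wfun' c - 1 := by
    have he : 3 * wfun' c - 1 = (wfun c * wfun' c - 1) - (wfun c - 3) * wfun' c := by ring
    rw [he]
    exact dvd_sub h1 h2
  omega

lemma wfun'_compat {c d : ℕ} (hcd : c ∣ d) (hc : c ≠ 0) (hd : d ≠ 0) :
    (c : ℤ) ∣ wfun' d - wfun' c := by
  have h1 : (c : ℤ) ∣ wfun c * wfun' c - 1 := wfun_mul_wfun' hc
  have h2 : (c : ℤ) ∣ wfun d * wfun' d - 1 :=
    (Int.natCast_dvd_natCast.mpr hcd).trans (wfun_mul_wfun' hd)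
  have h3 : (c : ℤ) ∣ wfun d - wfun c := wfun_compat hcd hc hd
  have h4 : (c : ℤ) ∣ (wfun' d - wfun' c) * wfun c := by
    have h5 : (c : ℤ) ∣ (wfun d - wfun c) * wfun' d := h3.mul_right _
    have : (wfun' d - wfun' c) * wfun c =
        (wfun d * wfun' d - 1) - (wfun c * wfun' c - 1) - (wfun d - wfun c) * wfun' d := by
      ring
    rw [this]
    exact dvd_sub (dvd_sub h2 h1) h5
  exact ((wfun_coprime hc).symm).dvd_of_dvd_mul_right h4

end wfam

section completion

variable {u u' : (ZMod 25)ˣ}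

lemma K_le_K {c d : ℕ} (hcd : c ∣ d) : K u d ≤ K u c := by
  rintro x ⟨hx, hm⟩
  exact ⟨hx, dvd_trans (Int.natCast_dvd_natCast.mpr hcd) hm⟩

lemma dvd_of_K_le_K {c d : ℕ} (h : K u d ≤ K u c) : (c : ℤ) ∣ (d : ℤ) := by
  have : (⟨0, (d : ℤ)⟩ : SG u) ∈ K u d := ⟨rfl, dvd_refl _⟩
  exact (h this).2

lemma fqm_comp {G : Type*} [Group G] {N M P : FiniteIndexNormal G} (h1 : N.1 ≤ M.1)
    (h2 : M.1 ≤ P.1) (q : G ⧸ N.1) :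
    finiteQuotientMap h2 (finiteQuotientMap h1 q) = finiteQuotientMap (h1.trans h2) q := by
  induction q using QuotientGroup.induction_on with
  | H g => rfl

variable (hu : u ^ (5 : ℕ) = 1) (hu' : u' ^ (5 : ℕ) = 1)
variable (w : ℕ → ℤ)
variable (hwu : ∀ c : ℕ, 5 ∣ c → c ≠ 0 → u' ^ (w c) = u)

/-- index-derived modulus -/
noncomputable def cIdx {G : Type*} [Group G] (M : FiniteIndexNormal G) : ℕ := 5 * M.1.index

lemma cIdx_5 {G : Type*} [Group G] (M : FiniteIndexNormal G) : 5 ∣ cIdx M := ⟨_, rfl⟩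
lemma cIdx_ne {G : Type*} [Group G] (M : FiniteIndexNormal G) : cIdx M ≠ 0 :=
  mul_ne_zero (by norm_num) M.2.2

lemma KFIN_le_self (M : FiniteIndexNormal (SG u')) :
    (KFIN u' hu' (cIdx M) (cIdx_5 M) (cIdx_ne M)).1 ≤ M.1 :=
  KFIN_le u' hu' M (by exact_mod_cast dvd_refl _) _ _

/-- The component map of the completion equivalence. -/
noncomputable def PhiAux (x : ∀ N : FiniteIndexNormal (SG u), SG u ⧸ N.1)
    (M : FiniteIndexNormal (SG u')) : SG u' ⧸ M.1 :=
  finiteQuotientMap (KFIN_le_self hu' M)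
    (liftTheta hu hu' (w (cIdx M)) (hwu _ (cIdx_5 M) (cIdx_ne M)) (cIdx M) (cIdx_5 M) (cIdx_ne M)
      (x (KFIN u hu (cIdx M) (cIdx_5 M) (cIdx_ne M))))

lemma lift_coherent (hwc : ∀ c d : ℕ, c ∣ d → c ≠ 0 → d ≠ 0 → (c : ℤ) ∣ w d - w c)
    {x : ∀ N : FiniteIndexNormal (SG u), SG u ⧸ N.1}
    (hx : x ∈ ProfiniteCompletion (SG u)) {c d : ℕ} (h5c : 5 ∣ c) (h0c : c ≠ 0)
    (h5d : 5 ∣ d) (h0d : d ≠ 0) (hcd : c ∣ d) :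
    finiteQuotientMap (N := KFIN u' hu' d h5d h0d) (M := KFIN u' hu' c h5c h0c)
        (K_le_K hcd)
        (liftTheta hu hu' (w d) (hwu d h5d h0d) d h5d h0d (x (KFIN u hu d h5d h0d)))
      = liftTheta hu hu' (w c) (hwu c h5c h0c) c h5c h0c (x (KFIN u hu c h5c h0c)) := by
  have hcomp := hx (KFIN u hu d h5d h0d) (KFIN u hu c h5c h0c) (K_le_K hcd)
  rw [← hcomp]
  generalize x (KFIN u hu d h5d h0d) = q
  induction q using QuotientGroup.induction_on with
  | H g =>
    show (QuotientGroup.mk (⟨g.a, w d * g.m⟩ : SG u') : SG u' ⧸ K u' c) = QuotientGroup.mk ⟨g.a, w c * g.m⟩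
    apply quotK_mk_eq
    have := hwc c d hcd h0c h0d
    have he : w c * g.m - w d * g.m = -((w d - w c) * g.m) := by ring
    rw [he]
    exact dvd_neg.mpr (this.mul_right g.m)

lemma PhiAux_spec (hwc : ∀ c d : ℕ, c ∣ d → c ≠ 0 → d ≠ 0 → (c : ℤ) ∣ w d - w c)
    {x : ∀ N : FiniteIndexNormal (SG u), SG u ⧸ N.1}
    (hx : x ∈ ProfiniteCompletion (SG u)) (M : FiniteIndexNormal (SG u')) {c : ℕ}
    (h5c : 5 ∣ c) (h0c : c ≠ 0) (hdvd : cIdx M ∣ c)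
    (hle : (KFIN u' hu' c h5c h0c).1 ≤ M.1) :
    PhiAux hu hu' w hwu x M
      = finiteQuotientMap hle
          (liftTheta hu hu' (w c) (hwu c h5c h0c) c h5c h0c (x (KFIN u hu c h5c h0c))) := by
  unfold PhiAux
  rw [← lift_coherent hu hu' w hwu hwc hx (cIdx_5 M) (cIdx_ne M) h5c h0c hdvd]
  exact fqm_comp _ _ _

lemma PhiAux_mem (hwc : ∀ c d : ℕ, c ∣ d → c ≠ 0 → d ≠ 0 → (c : ℤ) ∣ w d - w c)
    {x : ∀ N : FiniteIndexNormal (SG u), SG u ⧸ N.1}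
    (hx : x ∈ ProfiniteCompletion (SG u)) :
    (fun M => PhiAux hu hu' w hwu x M) ∈ ProfiniteCompletion (SG u') := by
  intro M M' hMM'
  show finiteQuotientMap hMM' (PhiAux hu hu' w hwu x M) = PhiAux hu hu' w hwu x M'
  set c := cIdx M * cIdx M' with hc
  have h5c : 5 ∣ c := (cIdx_5 M).mul_right _
  have h0c : c ≠ 0 := mul_ne_zero (cIdx_ne M) (cIdx_ne M')
  have hd1 : cIdx M ∣ c := dvd_mul_right _ _
  have hd2 : cIdx M' ∣ c := dvd_mul_left _ _
  have hle1 : (KFIN u' hu' c h5c h0c).1 ≤ M.1 :=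
    le_trans (K_le_K hd1) (KFIN_le_self hu' M)
  have hle2 : (KFIN u' hu' c h5c h0c).1 ≤ M'.1 :=
    le_trans (K_le_K hd2) (KFIN_le_self hu' M')
  rw [PhiAux_spec hu hu' w hwu hwc hx M h5c h0c hd1 hle1,
    PhiAux_spec hu hu' w hwu hwc hx M' h5c h0c hd2 hle2, fqm_comp]

variable (hwc : ∀ c d : ℕ, c ∣ d → c ≠ 0 → d ≠ 0 → (c : ℤ) ∣ w d - w c) in
/-- The forward monoid hom between profinite completions. -/
noncomputable def Phi : ProfiniteCompletion (SG u) →* ProfiniteCompletion (SG u') where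
  toFun x := ⟨fun M => PhiAux hu hu' w hwu
      (x : ∀ N : FiniteIndexNormal (SG u), SG u ⧸ N.1) M,
    PhiAux_mem hu hu' w hwu hwc x.2⟩
  map_one' := by
    apply Subtype.ext
    funext M
    show PhiAux hu hu' w hwu
      ((1 : ProfiniteCompletion (SG u)) : ∀ N : FiniteIndexNormal (SG u), SG u ⧸ N.1) M = 1
    unfold PhiAux
    have h1 : ((1 : ProfiniteCompletion (SG u)) : ∀ N : FiniteIndexNormal (SG u), SG u ⧸ N.1)
        (KFIN u hu (cIdx M) (cIdx_5 M) (cIdx_ne M)) = 1 := rfl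
    rw [h1, map_one, map_one]
  map_mul' x y := by
    apply Subtype.ext
    funext M
    show PhiAux hu hu' w hwu
        ((x * y : ProfiniteCompletion (SG u)) : ∀ N : FiniteIndexNormal (SG u), SG u ⧸ N.1) M
      = PhiAux hu hu' w hwu (x : ∀ N : FiniteIndexNormal (SG u), SG u ⧸ N.1) M
        * PhiAux hu hu' w hwu (y : ∀ N : FiniteIndexNormal (SG u), SG u ⧸ N.1) M
    unfold PhiAux
    have h1 : ((x * y : ProfiniteCompletion (SG u)) : ∀ N : FiniteIndexNormal (SG u), SG u ⧸ N.1)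
          (KFIN u hu (cIdx M) (cIdx_5 M) (cIdx_ne M))
        = (x : ∀ N : FiniteIndexNormal (SG u), SG u ⧸ N.1)
            (KFIN u hu (cIdx M) (cIdx_5 M) (cIdx_ne M))
          * (y : ∀ N : FiniteIndexNormal (SG u), SG u ⧸ N.1)
            (KFIN u hu (cIdx M) (cIdx_5 M) (cIdx_ne M)) := rfl
    rw [h1, map_mul, map_mul]

end completion

section inverse

variable {u u' : (ZMod 25)ˣ}
variable (hu : u ^ (5 : ℕ) = 1) (hu' : u' ^ (5 : ℕ) = 1)
variable (w w' : ℕ → ℤ)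
variable (hwu : ∀ c : ℕ, 5 ∣ c → c ≠ 0 → u' ^ (w c) = u)
variable (hwu' : ∀ c : ℕ, 5 ∣ c → c ≠ 0 → u ^ (w' c) = u')

lemma PhiAux_PhiAux
    (hwc : ∀ c d : ℕ, c ∣ d → c ≠ 0 → d ≠ 0 → (c : ℤ) ∣ w d - w c)
    (hw'c : ∀ c d : ℕ, c ∣ d → c ≠ 0 → d ≠ 0 → (c : ℤ) ∣ w' d - w' c)
    (hww' : ∀ c : ℕ, 5 ∣ c → c ≠ 0 → (c : ℤ) ∣ w c * w' c - 1)
    {x : ∀ N : FiniteIndexNormal (SG u), SG u ⧸ N.1}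
    (hx : x ∈ ProfiniteCompletion (SG u)) (N : FiniteIndexNormal (SG u)) :
    PhiAux hu' hu w' hwu' (fun M => PhiAux hu hu' w hwu x M) N = x N := by
  -- abbreviations
  set c₁ := cIdx N with hc₁
  have h5c₁ : 5 ∣ c₁ := cIdx_5 N
  have h0c₁ : c₁ ≠ 0 := cIdx_ne N
  set M₁ : FiniteIndexNormal (SG u') := KFIN u' hu' c₁ h5c₁ h0c₁ with hM₁
  set c₂ := cIdx M₁ with hc₂
  have h5c₂ : 5 ∣ c₂ := cIdx_5 M₁
  have h0c₂ : c₂ ≠ 0 := cIdx_ne M₁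
  have hc12 : c₁ ∣ c₂ := by
    have h := dvd_of_K_le_K (u := u') (KFIN_le_self hu' M₁)
    exact_mod_cast h
  -- the inner value
  show finiteQuotientMap (KFIN_le_self hu N)
      (liftTheta hu' hu (w' c₁) (hwu' _ h5c₁ h0c₁) c₁ h5c₁ h0c₁
        (PhiAux hu hu' w hwu x M₁)) = x N
  have hinner : PhiAux hu hu' w hwu x M₁
      = finiteQuotientMap (KFIN_le_self hu' M₁)
          (liftTheta hu hu' (w c₂) (hwu _ h5c₂ h0c₂) c₂ h5c₂ h0c₂
            (x (KFIN u hu c₂ h5c₂ h0c₂))) := rfl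
  rw [hinner]
  -- replace x N by the projection of x (K c₂)
  have hKN : (KFIN u hu c₂ h5c₂ h0c₂).1 ≤ N.1 :=
    le_trans (K_le_K hc12) (KFIN_le_self hu N)
  rw [← hx (KFIN u hu c₂ h5c₂ h0c₂) N hKN]
  generalize x (KFIN u hu c₂ h5c₂ h0c₂) = q
  induction q using QuotientGroup.induction_on with
  | H g =>
    rw [liftTheta_mk, finiteQuotientMap_mk, liftTheta_mk, finiteQuotientMap_mk,
      finiteQuotientMap_mk]
    show (QuotientGroup.mk (⟨(⟨g.a, w c₂ * g.m⟩ : SG u').a, w' c₁ * (⟨g.a, w c₂ * g.m⟩ : SG u').m⟩ : SG u) : SG u ⧸ N.1) = QuotientGroup.mk g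
    refine QuotientGroup.eq.mpr ?_
    refine KFIN_le_self hu N ?_
    show ((⟨g.a, w' c₁ * (w c₂ * g.m)⟩ : SG u)⁻¹ * ⟨g.a, g.m⟩) ∈ K u c₁
    rw [inv_mul_same_a]
    refine ⟨rfl, ?_⟩
    show (c₁ : ℤ) ∣ g.m - w' c₁ * (w c₂ * g.m)
    have h1 : (c₁ : ℤ) ∣ w c₂ - w c₁ := hwc c₁ c₂ hc12 h0c₁ h0c₂
    have h2 : (c₁ : ℤ) ∣ w c₁ * w' c₁ - 1 := hww' c₁ h5c₁ h0c₁
    have he : g.m - w' c₁ * (w c₂ * g.m)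
        = -((w c₂ - w c₁) * (w' c₁ * g.m)) - (w c₁ * w' c₁ - 1) * g.m := by ring
    rw [he]
    exact dvd_sub (dvd_neg.mpr (h1.mul_right _)) (h2.mul_right _)


/-- The completion equivalence. -/
noncomputable def PhiEquiv
    (hwc : ∀ c d : ℕ, c ∣ d → c ≠ 0 → d ≠ 0 → (c : ℤ) ∣ w d - w c)
    (hw'c : ∀ c d : ℕ, c ∣ d → c ≠ 0 → d ≠ 0 → (c : ℤ) ∣ w' d - w' c)
    (hww' : ∀ c : ℕ, 5 ∣ c → c ≠ 0 → (c : ℤ) ∣ w c * w' c - 1)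
    (hw'w : ∀ c : ℕ, 5 ∣ c → c ≠ 0 → (c : ℤ) ∣ w' c * w c - 1) :
    ProfiniteCompletion (SG u) ≃* ProfiniteCompletion (SG u') where
  toFun := Phi hu hu' w hwu hwc
  invFun := Phi hu' hu w' hwu' hw'c
  left_inv x := by
    apply Subtype.ext
    funext N
    exact PhiAux_PhiAux hu hu' w w' hwu hwu' hwc hw'c hww' x.2 N
  right_inv y := by
    apply Subtype.ext
    funext N
    exact PhiAux_PhiAux hu' hu w' w hwu' hwu hw'c hwc hw'w y.2 N
  map_mul' x y := (Phi hu hu' w hwu hwc).map_mul' x y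

lemma Phi_continuous
    (hwc : ∀ c d : ℕ, c ∣ d → c ≠ 0 → d ≠ 0 → (c : ℤ) ∣ w d - w c) :
    Continuous (Phi hu hu' w hwu hwc) := by
  apply Continuous.subtype_mk
  apply continuous_pi
  intro M
  show Continuous fun x : ProfiniteCompletion (SG u) =>
    PhiAux hu hu' w hwu (x : ∀ N : FiniteIndexNormal (SG u), SG u ⧸ N.1) M
  have hD : DiscreteTopology (SG u ⧸ (KFIN u hu (cIdx M) (cIdx_5 M) (cIdx_ne M)).1) := ⟨rfl⟩
  have h1 : Continuous fun x : ProfiniteCompletion (SG u) =>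
      (x : ∀ N : FiniteIndexNormal (SG u), SG u ⧸ N.1)
        (KFIN u hu (cIdx M) (cIdx_5 M) (cIdx_ne M)) :=
    (continuous_apply _).comp continuous_subtype_val
  exact (continuous_of_discreteTopology
    (f := fun q => finiteQuotientMap (KFIN_le_self hu' M)
      (liftTheta hu hu' (w (cIdx M)) (hwu _ (cIdx_5 M) (cIdx_ne M)) (cIdx M) (cIdx_5 M)
        (cIdx_ne M) q))).comp h1

end inverse

section noniso

variable {u u' : (ZMod 25)ˣ}

lemma pow_a0' (a : ZMod 25) (k : ℕ) : (⟨a, 0⟩ : SG u) ^ k = ⟨(k : ZMod 25) * a, 0⟩ := by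
  rw [pow_a0]

lemma pow25_a0 (a : ZMod 25) : (⟨a, 0⟩ : SG u) ^ (25 : ℕ) = 1 := by
  rw [pow_a0']
  have h : ((25 : ℕ) : ZMod 25) = 0 := by decide
  rw [h, zero_mul]
  rfl

lemma m_eq_zero_of_a0 (φ : SG u ≃* SG u') (a : ZMod 25) : (φ ⟨a, 0⟩).m = 0 := by
  have h1 : (φ ⟨a, 0⟩) ^ (25 : ℕ) = 1 := by
    rw [← map_pow, pow25_a0, map_one]
  have h2 := congrArg SG.m h1
  rw [pow_m] at h2
  have : (25 : ℤ) * (φ ⟨a, 0⟩).m = 0 := by exact_mod_cast h2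
  omega

lemma decompose (g : SG u) : g = (⟨g.a, 0⟩ : SG u) * ⟨0, g.m⟩ := by
  ext
  · show g.a = g.a + ((u ^ (0 : ℤ) : (ZMod 25)ˣ) : ZMod 25) * 0
    simp
  · show g.m = 0 + g.m
    simp

lemma mulequiv_m_eq (φ : SG u ≃* SG u') (g : SG u) :
    (φ g).m = (φ ⟨0, 1⟩).m * g.m := by
  conv_lhs => rw [decompose g]
  have h0 : (⟨0, g.m⟩ : SG u) = (⟨0, 1⟩ : SG u) ^ g.m := by
    rw [zpow_iota, mul_one]
  rw [map_mul, h0, map_zpow]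
  show (φ ⟨g.a, 0⟩).m + ((φ ⟨0, 1⟩) ^ g.m).m = _
  rw [m_eq_zero_of_a0, zpow_m]
  ring

lemma unit_eq_of_mulequiv (φ : SG u ≃* SG u') :
    ∃ e : ℤ, (e = 1 ∨ e = -1) ∧
      ((u' ^ e : (ZMod 25)ˣ) : ZMod 25) * (φ ⟨1, 0⟩).a = ((u : (ZMod 25)ˣ) : ZMod 25) * (φ ⟨1, 0⟩).a
        ∧ 5 * (φ ⟨1, 0⟩).a ≠ 0 := by
  set r := (φ ⟨1, 0⟩).a with hrdef
  have hm : (φ ⟨1, 0⟩).m = 0 := m_eq_zero_of_a0 φ 1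
  have hφ1 : φ ⟨1, 0⟩ = ⟨r, 0⟩ := by
    ext
    · rfl
    · exact hm
  -- surjectivity gives e = ±1
  obtain ⟨s, hs⟩ := φ.surjective ⟨0, 1⟩
  have h1 : (1 : ℤ) = (φ ⟨0, 1⟩).m * s.m := by
    have := mulequiv_m_eq φ s
    rw [hs] at this
    exact this
  set e := (φ ⟨0, 1⟩).m with hedef
  have he : e = 1 ∨ e = -1 := by
    have : IsUnit e := IsUnit.of_mul_eq_one (a := e) s.m h1.symm
    exact Int.isUnit_iff.mp this
  refine ⟨e, he, ?_, ?_⟩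
  · -- conjugation relation
    have hconj : (⟨0, 1⟩ : SG u) * ⟨1, 0⟩ * (⟨0, 1⟩ : SG u)⁻¹ = ⟨(u : ZMod 25), 0⟩ := by
      rw [conj_formula]
      ext
      · show (0 : ZMod 25) + ((u ^ (1 : ℤ) : (ZMod 25)ˣ) : ZMod 25) * 1
            - ((u ^ (0 : ℤ) : (ZMod 25)ˣ) : ZMod 25) * 0 = (u : ZMod 25)
        simp
      · rfl
    have h6 : (⟨(u : ZMod 25), 0⟩ : SG u) = (⟨1, 0⟩ : SG u) ^ ((u : ZMod 25).val) := by
      rw [pow_a0']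
      ext
      · show (u : ZMod 25) = (((u : ZMod 25).val : ℕ) : ZMod 25) * 1
        rw [mul_one, ZMod.natCast_val, ZMod.cast_id]
      · rfl
    have happ := congrArg φ hconj
    rw [map_mul, map_mul, map_inv, hφ1, h6, map_pow, hφ1, conj_formula] at happ
    have ha := congrArg SG.a happ
    -- simplify both sides
    have hL : ((φ ⟨0, 1⟩).a + ((u' ^ (φ ⟨0,1⟩).m : (ZMod 25)ˣ) : ZMod 25) * r
        - ((u' ^ ((⟨r, 0⟩ : SG u').m) : (ZMod 25)ˣ) : ZMod 25) * (φ ⟨0,1⟩).a)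
        = ((u' ^ e : (ZMod 25)ˣ) : ZMod 25) * r := by
      show ((φ ⟨0, 1⟩).a + ((u' ^ (φ ⟨0,1⟩).m : (ZMod 25)ˣ) : ZMod 25) * r
        - ((u' ^ (0 : ℤ) : (ZMod 25)ˣ) : ZMod 25) * (φ ⟨0,1⟩).a) = _
      rw [← hedef]
      simp
    rw [hL] at ha
    have hR : ((⟨r, 0⟩ : SG u') ^ ((u : ZMod 25).val)).a = ((u : ZMod 25)) * r := by
      rw [pow_a0']
      show (((u : ZMod 25).val : ℕ) : ZMod 25) * r = _
      rw [ZMod.natCast_val, ZMod.cast_id]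
    rw [hR] at ha
    exact ha
  · -- 5 * r ≠ 0
    intro h5r
    have h5 : (φ ⟨1, 0⟩) ^ (5 : ℕ) = 1 := by
      rw [hφ1, pow_a0']
      have : ((5 : ℕ) : ZMod 25) * r = 0 := by exact_mod_cast h5r
      rw [this]
      rfl
    rw [← map_pow] at h5
    have h51 : (⟨1, 0⟩ : SG u) ^ (5 : ℕ) = 1 := by
      have := φ.injective (h5.trans (map_one φ).symm)
      exact this
    rw [pow_a0'] at h51
    have := congrArg SG.a h51
    simp at this
    revert this
    decide

end noniso

section instantiate

variable {u : (ZMod 25)ˣ}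

lemma fg_SG : Group.FG (SG u) := by
  refine ⟨⟨{⟨1, 0⟩, ⟨0, 1⟩}, ?_⟩⟩
  rw [eq_top_iff]
  intro g _
  have hdec := decompose g
  have h1 : (⟨g.a, 0⟩ : SG u) ∈ Subgroup.closure (({⟨1, 0⟩, ⟨0, 1⟩} : Finset (SG u)) : Set (SG u)) := by
    have : (⟨g.a, 0⟩ : SG u) = (⟨1, 0⟩ : SG u) ^ (g.a.val) := by
      rw [pow_a0']
      ext
      · show g.a = ((g.a.val : ℕ) : ZMod 25) * 1
        rw [mul_one, ZMod.natCast_val, ZMod.cast_id]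
      · rfl
    rw [this]
    exact Subgroup.pow_mem _ (Subgroup.subset_closure (by simp)) _
  have h2 : (⟨0, g.m⟩ : SG u) ∈ Subgroup.closure (({⟨1, 0⟩, ⟨0, 1⟩} : Finset (SG u)) : Set (SG u)) := by
    have : (⟨0, g.m⟩ : SG u) = (⟨0, 1⟩ : SG u) ^ g.m := by rw [zpow_iota, mul_one]
    rw [this]
    exact Subgroup.zpow_mem _ (Subgroup.subset_closure (by simp)) _
  rw [hdec]
  exact Subgroup.mul_mem _ h1 h2

lemma rf_SG (hu : u ^ (5 : ℕ) = 1) : ResiduallyFinite (SG u) := by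
  intro g hg
  rcases eq_or_ne g.m 0 with hm | hm
  · -- g.a ≠ 0 : use K u 5
    have ha : g.a ≠ 0 := by
      intro ha
      apply hg
      ext
      · exact ha
      · exact hm
    refine ⟨K u 5, K_normal (u_zpow_c u hu (dvd_refl 5)), ?_, ?_⟩
    · haveI := finite_quotK (u := u) 5 (by norm_num)
      exact Subgroup.index_ne_zero_of_finite
    · rintro ⟨ha', _⟩
      exact ha ha'
  · -- g.m ≠ 0 : use L u (|g.m| + 1)
    set c := g.m.natAbs + 1 with hc
    refine ⟨L u c, L_normal c, ?_, ?_⟩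
    · haveI := finite_quotL (u := u) c (by omega)
      exact Subgroup.index_ne_zero_of_finite
    · intro hmem
      have hdvd : (c : ℤ) ∣ g.m := hmem
      have : (c : ℕ) ∣ g.m.natAbs := Int.natCast_dvd_natCast.mp (by
        rwa [Int.dvd_natAbs])
      have hpos : 0 < g.m.natAbs := Int.natAbs_pos.mpr hm
      have := Nat.le_of_dvd hpos this
      omega

/-- the unit 6 -/
def u6 : (ZMod 25)ˣ := ⟨6, 21, by decide, by decide⟩
/-- the unit 11 -/
def u11 : (ZMod 25)ˣ := ⟨11, 16, by decide, by decide⟩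

lemma hu6 : u6 ^ (5 : ℕ) = 1 := by
  rw [Units.ext_iff, Units.val_pow_eq_pow_val]
  decide

lemma hu11 : u11 ^ (5 : ℕ) = 1 := by
  rw [Units.ext_iff, Units.val_pow_eq_pow_val]
  decide

lemma u11_cube : u11 ^ (3 : ℕ) = u6 := by
  rw [Units.ext_iff, Units.val_pow_eq_pow_val]
  decide

lemma u6_sq : u6 ^ (2 : ℕ) = u11 := by
  rw [Units.ext_iff, Units.val_pow_eq_pow_val]
  decide

lemma zpow_of_mod5 {v : (ZMod 25)ˣ} (hv : v ^ (5 : ℕ) = 1) (t : ℤ) (r : ℕ)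
    (h : (5 : ℤ) ∣ t - (r : ℤ)) : v ^ t = v ^ (r : ℕ) := by
  obtain ⟨k, hk⟩ := h
  have ht : t = (r : ℤ) + 5 * k := by linarith
  have h5k : v ^ ((5 : ℤ) * k) = 1 := by
    rw [show (5 : ℤ) * k = ((5 : ℕ) : ℤ) * k by push_cast; ring, zpow_mul, zpow_natCast, hv,
      one_zpow]
  rw [ht, zpow_add, zpow_natCast, h5k, mul_one]

lemma hwu_inst : ∀ c : ℕ, 5 ∣ c → c ≠ 0 → u11 ^ (wfun c) = u6 := by
  intro c h5 h0
  rw [zpow_of_mod5 hu11 (wfun c) 3 (wfun_mod5 h5 h0), u11_cube]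

lemma hwu'_inst : ∀ c : ℕ, 5 ∣ c → c ≠ 0 → u6 ^ (wfun' c) = u11 := by
  intro c h5 h0
  rw [zpow_of_mod5 hu6 (wfun' c) 2 (wfun'_mod5 h5 h0), u6_sq]

end instantiate

lemma noniso_key : ∀ a : ZMod 25, 5 * a ≠ 0 → 11 * a ≠ 6 * a ∧ 16 * a ≠ 6 * a := by decide

lemma isEmpty_mulEquiv : IsEmpty (SG u6 ≃* SG u11) := by
  constructor
  intro φ
  obtain ⟨e, he, hrel, h5r⟩ := unit_eq_of_mulequiv φ
  set r := (φ ⟨1, 0⟩).a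
  have hu6coe : ((u6 : (ZMod 25)ˣ) : ZMod 25) = 6 := rfl
  rw [hu6coe] at hrel
  have hkey := noniso_key r h5r
  rcases he with he | he
  · rw [he] at hrel
    have h11 : ((u11 ^ (1 : ℤ) : (ZMod 25)ˣ) : ZMod 25) = 11 := by
      rw [zpow_one]
      rfl
    rw [h11] at hrel
    exact hkey.1 hrel
  · rw [he] at hrel
    have h16 : ((u11 ^ (-1 : ℤ) : (ZMod 25)ˣ) : ZMod 25) = 16 := by
      rw [zpow_neg, zpow_one]
      rfl
    rw [h16] at hrel
    exact hkey.2 hrel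

end SG

/-- There exist finitely generated residually finite groups that are not isomorphic but whose
profinite completions are isomorphic as topological groups. -/
theorem exists_nonisomorphic_fg_residually_finite_with_isomorphic_profinite_completions :
    ∃ (G H : Type) (instG : Group G) (instH : Group H),
      letI := instG
      letI := instH
      Group.FG G ∧ Group.FG H ∧ ResiduallyFinite G ∧ ResiduallyFinite H ∧
      IsEmpty (G ≃* H) ∧
      ∃ e : ProfiniteCompletion G ≃* ProfiniteCompletion H,
        Continuous e ∧ Continuous e.symm := by
  classical
  refine ⟨SG SG.u6, SG SG.u11, inferInstance, inferInstance, ?_⟩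
  have hwc : ∀ c d : ℕ, c ∣ d → c ≠ 0 → d ≠ 0 → (c : ℤ) ∣ SG.wfun d - SG.wfun c :=
    fun c d hcd hc hd => SG.wfun_compat hcd hc hd
  have hw'c : ∀ c d : ℕ, c ∣ d → c ≠ 0 → d ≠ 0 → (c : ℤ) ∣ SG.wfun' d - SG.wfun' c :=
    fun c d hcd hc hd => SG.wfun'_compat hcd hc hd
  have hww' : ∀ c : ℕ, 5 ∣ c → c ≠ 0 → (c : ℤ) ∣ SG.wfun c * SG.wfun' c - 1 :=
    fun c _ hc => SG.wfun_mul_wfun' hc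
  have hw'w : ∀ c : ℕ, 5 ∣ c → c ≠ 0 → (c : ℤ) ∣ SG.wfun' c * SG.wfun c - 1 := by
    intro c h5 hc
    have := SG.wfun_mul_wfun' (c := c) hc
    rwa [mul_comm] at this
  refine ⟨SG.fg_SG, SG.fg_SG, SG.rf_SG SG.hu6, SG.rf_SG SG.hu11, SG.isEmpty_mulEquiv, ?_⟩
  refine ⟨SG.PhiEquiv SG.hu6 SG.hu11 SG.wfun SG.wfun' SG.hwu_inst SG.hwu'_inst
    hwc hw'c hww' hw'w, ?_, ?_⟩
  · exact SG.Phi_continuous SG.hu6 SG.hu11 SG.wfun SG.hwu_inst hwc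
  · exact SG.Phi_continuous SG.hu11 SG.hu6 SG.wfun' SG.hwu'_inst hw'c
end

section
/- Let A be an abelian group, viewed as a discrete topological group, such that every element of A has finite order. Then the Pontryagin dual A* of A is a compact and totally disconnected topological group (i.e., A* is profinite). -/
open Set

private lemma circle_pow_finite (n : ℕ) (hn : 0 < n) :
    Finite {z : Circle // z ^ n = 1} := by
  have hfin : {w : ℂ | w ^ n = 1}.Finite := by
    refine Set.Finite.subset (Polynomial.nthRoots n (1 : ℂ)).toFinset.finite_toSet ?_
    intro w hw
    simp only [Finset.mem_coe, Multiset.mem_toFinset, Polynomial.mem_nthRoots hn]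
    exact hw
  have : Finite {w : ℂ // w ^ n = 1} := hfin.to_subtype
  refine Finite.of_injective (fun z => (⟨(z : Circle), by
    have := congrArg Circle.coeHom z.2
    exact (map_pow Circle.coeHom _ n).symm.trans (this.trans (map_one _))⟩ : {w : ℂ // w ^ n = 1})) ?_
  intro a b hab
  simp only [Subtype.mk.injEq] at hab
  exact Subtype.ext (Circle.coe_injective (by have h := congrArg Subtype.val hab; exact h))

/-- The Pontryagin dual of a discrete abelian torsion group is compact and totally
disconnected (i.e. profinite). -/
theorem pontryaginDual_of_discrete_torsion_profinite
    (A : Type*) [CommGroup A] [TopologicalSpace A] [DiscreteTopology A]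
    (htor : ∀ a : A, IsOfFinOrder a) :
    CompactSpace (PontryaginDual A) ∧ TotallyDisconnectedSpace (PontryaginDual A) := by
  classical
  -- the evaluation map into the product
  set Φ : PontryaginDual A → (A → Circle) := fun χ a => χ a with hΦ
  have heval : ∀ a : A, Continuous fun χ : PontryaginDual A => χ a := fun a => by
    have h : Continuous fun χ : ContinuousMonoidHom A Circle => χ a := continuous_eval_const a
    exact h
  have hΦcont : Continuous Φ := continuous_pi fun a => heval a
  have hΦinj : Function.Injective Φ := by
    intro χ₁ χ₂ h
    exact ContinuousMonoidHom.ext fun a => congrFun h a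
  -- the range of Φ
  set S : Set (A → Circle) :=
    {f | f 1 = 1 ∧ ∀ x y, f (x * y) = f x * f y} with hS
  have hrange : Set.range Φ = S := by
    refine Subset.antisymm ?_ ?_
    · rintro _ ⟨χ, rfl⟩
      exact ⟨map_one χ, fun x y => map_mul χ x y⟩
    · rintro f ⟨h1, hmul⟩
      exact ⟨⟨⟨⟨f, h1⟩, hmul⟩, continuous_of_discreteTopology⟩, rfl⟩
  have hSclosed : IsClosed S := by
    rw [hS]
    simp only [setOf_and, setOf_forall]
    exact (isClosed_singleton.preimage (continuous_apply 1)).inter <|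
      isClosed_iInter fun x => isClosed_iInter fun y =>
        isClosed_eq (continuous_apply (x * y))
          ((continuous_apply x).mul (continuous_apply y))
  -- the inverse map from S
  set Ψ : S → PontryaginDual A := fun f =>
    ⟨⟨⟨(f : A → Circle), f.2.1⟩, f.2.2⟩, continuous_of_discreteTopology⟩ with hΨ
  have hΨcont : Continuous Ψ := by
    refine ContinuousMonoidHom.continuous_of_continuous_uncurry Ψ ?_
    rw [continuous_iff_continuousAt]
    rintro ⟨f, a⟩
    have h1 : ContinuousAt (fun q : S × A => (q.1 : A → Circle) a) (f, a) :=
      (((continuous_apply a).comp continuous_subtype_val).comp continuous_fst).continuousAt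
    refine h1.congr ?_
    have hmem : {q : S × A | q.2 = a} ∈ nhds (f, a) := by
      have : IsOpen {q : S × A | q.2 = a} :=
        (isOpen_discrete {a}).preimage continuous_snd
      exact this.mem_nhds rfl
    filter_upwards [hmem] with q hq
    simp only [Function.uncurry, hΨ]
    rw [hq]
    rfl
  have hΨΦ : ∀ χ, Ψ ⟨Φ χ, hrange ▸ Set.mem_range_self χ⟩ = χ := fun χ => rfl
  -- Φ is inducing onto S
  constructor
  · -- compactness
    have hScompact : IsCompact S := hSclosed.isCompact
    have : CompactSpace S := isCompact_iff_compactSpace.mp hScompact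
    -- Ψ is a continuous surjection from the compact space S
    have hΨsurj : Function.Surjective Ψ := by
      intro χ
      exact ⟨⟨Φ χ, hrange ▸ Set.mem_range_self χ⟩, hΨΦ χ⟩
    have huniv : IsCompact (Set.univ : Set (PontryaginDual A)) :=
      hΨsurj.range_eq ▸ isCompact_range hΨcont
    exact ⟨huniv⟩
  · -- total disconnectedness
    have hTD : TotallyDisconnectedSpace (∀ a : A, {z : Circle // z ^ orderOf a = 1}) := by
      have : ∀ a : A, TotallyDisconnectedSpace {z : Circle // z ^ orderOf a = 1} := by
        intro a
        have : Finite {z : Circle // z ^ orderOf a = 1} :=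
          circle_pow_finite (orderOf a) ((htor a).orderOf_pos)
        infer_instance
      infer_instance
    set Φ' : PontryaginDual A → (∀ a : A, {z : Circle // z ^ orderOf a = 1}) :=
      fun χ a => ⟨χ a, by rw [← map_pow, pow_orderOf_eq_one, map_one]⟩ with hΦ'
    have hΦ'cont : Continuous Φ' := by
      exact continuous_pi fun a => (heval a).subtype_mk _
    have hΦ'inj : Function.Injective Φ' := by
      intro χ₁ χ₂ h
      exact ContinuousMonoidHom.ext fun a => congrArg Subtype.val (congrFun h a)
    constructor
    exact isTotallyDisconnected_of_image hΦ'cont.continuousOn hΦ'inj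
      (isTotallyDisconnected_of_totallyDisconnectedSpace _)
end

section
/- Let A and B be countable abelian groups, viewed as discrete topological groups, in which every element has finite order. Then A and B are isomorphic as groups if and only if their Pontryagin duals A* and B* are isomorphic as topological groups (i.e., there is a group isomorphism A* → B* that is a homeomorphism). -/
open Complex Function Filter
open scoped Classical

/-! ### Auxiliary results: Pontryagin duality for discrete torsion abelian groups -/

noncomputable instance : DivisibleBy (Additive Circle) ℤ where
  div z n := Additive.ofMul (Circle.exp (Complex.arg (z.toMul : ℂ) / n))
  div_zero z := by simp
  div_cancel {n} z hn := by
    have h1 : ∀ (m : ℤ) (t : ℝ),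
        m • Additive.ofMul (Circle.exp t) = Additive.ofMul (Circle.exp (m • t)) :=
      fun m t => (map_zsmul Circle.expHom m t).symm
    rw [h1]
    have : (n : ℝ) ≠ 0 := Int.cast_ne_zero.2 hn
    rw [zsmul_eq_mul, mul_div_cancel₀ _ this, Circle.exp_arg]
    rfl

/-- Characters into the circle extend from subgroups (divisibility of the circle). -/
theorem PontryaginAux.exists_extension {A : Type*} [CommGroup A] (H : Subgroup A)
    (φ : H →* Circle) : ∃ ψ : A →* Circle, ∀ h : H, ψ h = φ h := by
  have baer : Module.Baer ℤ (Additive Circle) := Module.Baer.of_divisible _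
  have hinj : Function.Injective ⇑(MonoidHom.toAdditive H.subtype) := fun x y h =>
    Subtype.ext (congrArg Additive.toMul h)
  obtain ⟨g, hg⟩ := baer.extension_property_addMonoidHom
    (MonoidHom.toAdditive H.subtype) hinj (MonoidHom.toAdditive φ)
  refine ⟨MonoidHom.toAdditive.symm g, fun h => ?_⟩
  exact congrArg Additive.toMul (DFunLike.congr_fun hg (Additive.ofMul h))

/-- The circle as units of `ℂ`. -/
noncomputable def PontryaginAux.circleToUnits : Circle →* ℂˣ where
  toFun z := Units.mk0 (z : ℂ) z.coe_ne_zero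
  map_one' := by ext; simp
  map_mul' z w := by ext; simp

lemma PontryaginAux.norm_unit_eq_one {u : ℂˣ} {n : ℕ} (hn : n ≠ 0) (hu : u ^ n = 1) :
    ‖(u : ℂ)‖ = 1 := by
  have h : ‖(u : ℂ)‖ ^ n = 1 := by
    rw [← norm_pow]; norm_cast; rw [hu]; simp
  rcases (pow_eq_one_iff_cases.mp h) with h' | h' | h' <;> first
    | exact absurd h' hn
    | exact h'
    | nlinarith [h'.1, norm_nonneg (u : ℂ)]

/-- For a torsion commutative group, circle-valued characters coincide with `ℂˣ`-valued ones. -/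
noncomputable def PontryaginAux.circleEquivUnits {H : Type*} [CommGroup H]
    (hH : ∀ h : H, IsOfFinOrder h) : (H →* Circle) ≃* (H →* ℂˣ) where
  toFun ψ := circleToUnits.comp ψ
  invFun φ :=
    { toFun := fun h => ⟨(φ h : ℂ), by
        have h1 : φ h ^ orderOf h = 1 := by
          rw [← map_pow, pow_orderOf_eq_one, map_one]
        exact mem_sphere_zero_iff_norm.2 (norm_unit_eq_one (hH h).orderOf_pos.ne' h1)⟩
      map_one' := by ext; simp
      map_mul' := fun a b => by ext; simp; rfl }
  left_inv ψ := MonoidHom.ext fun h => Subtype.ext rfl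
  right_inv φ := MonoidHom.ext fun h => Units.ext rfl
  map_mul' ψ χ := MonoidHom.ext fun h => Units.ext rfl

lemma PontryaginAux.nonempty_mulEquiv_circleChar (H : Type*) [CommGroup H] [Finite H] :
    Nonempty ((H →* Circle) ≃* H) := by
  haveI : NeZero (Monoid.exponent H) := ⟨Monoid.exponent_ne_zero_of_finite⟩
  haveI : NeZero ((Monoid.exponent H : ℂ)) :=
    ⟨Nat.cast_ne_zero.2 Monoid.exponent_ne_zero_of_finite⟩
  obtain ⟨e⟩ := CommGroup.monoidHom_mulEquiv_of_hasEnoughRootsOfUnity H ℂ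
  exact ⟨(circleEquivUnits fun h => isOfFinOrder_of_finite h).trans e⟩

lemma PontryaginAux.exists_ne_one_finite {H : Type*} [CommGroup H] [Finite H] {a : H}
    (ha : a ≠ 1) : ∃ ψ : H →* Circle, ψ a ≠ 1 := by
  haveI : NeZero ((Monoid.exponent H : ℂ)) :=
    ⟨Nat.cast_ne_zero.2 Monoid.exponent_ne_zero_of_finite⟩
  obtain ⟨φ, hφ⟩ := CommGroup.exists_apply_ne_one_of_hasEnoughRootsOfUnity H ℂ ha
  refine ⟨(circleEquivUnits fun h => isOfFinOrder_of_finite h).symm φ, fun h => hφ ?_⟩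
  exact Units.ext (congrArg Subtype.val h)

/-- Circle-valued characters separate points of torsion abelian groups. -/
lemma PontryaginAux.exists_apply_ne_one {A : Type*} [CommGroup A] {a : A}
    (hfin : IsOfFinOrder a) (ha : a ≠ 1) : ∃ ψ : A →* Circle, ψ a ≠ 1 := by
  let H := Subgroup.zpowers a
  haveI : Finite ↥H := hfin.finite_zpowers.to_subtype
  have haH : (⟨a, Subgroup.mem_zpowers a⟩ : ↥H) ≠ 1 := fun h => ha (congrArg Subtype.val h)
  obtain ⟨φ, hφ⟩ := exists_ne_one_finite haH
  obtain ⟨ψ, hψ⟩ := PontryaginAux.exists_extension H φ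
  refine ⟨ψ, ?_⟩
  have hval := hψ ⟨a, Subgroup.mem_zpowers a⟩
  rw [show ((⟨a, Subgroup.mem_zpowers a⟩ : ↥H) : A) = a from rfl] at hval
  rw [hval]
  exact hφ

lemma PontryaginAux.circle_exp_pow (t : ℝ) (n : ℕ) :
    Circle.exp t ^ n = Circle.exp (n * t) := by
  induction n with
  | zero => simp
  | succ k ih => rw [pow_succ, ih, ← Circle.exp_add]; push_cast; ring_nf

/-- A subgroup of the circle contained in the right half plane is trivial. -/
lemma PontryaginAux.circle_subgroup_trivial {S : Subgroup Circle}
    (hS : ∀ w ∈ S, 0 < Complex.re (w : ℂ)) {z : Circle} (hz : z ∈ S) : z = 1 := by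
  by_contra hz1
  have harg : Complex.arg (z : ℂ) ∈ Set.Ioc (-Real.pi) Real.pi := Complex.arg_mem_Ioc _
  have hargne : Complex.arg (z : ℂ) ≠ 0 := by
    intro h0
    apply hz1
    apply Circle.injective_arg
    simp [h0, Complex.arg_one]
  set θ := Complex.arg (z : ℂ) with hθ
  obtain ⟨w, hwS, hwexp⟩ : ∃ w, w ∈ S ∧ w = Circle.exp |θ| := by
    rcases lt_or_gt_of_ne hargne with hneg | hpos
    · refine ⟨z⁻¹, S.inv_mem hz, ?_⟩
      rw [abs_of_neg hneg, Circle.exp_neg, Circle.exp_arg]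
    · refine ⟨z, hz, ?_⟩
      rw [abs_of_pos hpos, Circle.exp_arg]
  have hφpos : 0 < |θ| := abs_pos.2 hargne
  have hφle : |θ| ≤ Real.pi := abs_le.2 ⟨harg.1.le, harg.2⟩
  set n := ⌈(Real.pi / 2) / |θ|⌉₊ with hn
  have h1 : Real.pi / 2 ≤ n * |θ| := by
    rw [← div_le_iff₀ hφpos] at *
    exact Nat.le_ceil _
  have h2 : (n : ℝ) * |θ| ≤ Real.pi + Real.pi / 2 := by
    have hlt : (n : ℝ) < (Real.pi / 2) / |θ| + 1 := Nat.ceil_lt_add_one (by positivity)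
    have := mul_lt_mul_of_pos_right hlt hφpos
    rw [add_mul, one_mul, div_mul_cancel₀ _ hφpos.ne'] at this
    linarith
  have hcos : Real.cos (n * |θ|) ≤ 0 := Real.cos_nonpos_of_pi_div_two_le_of_le h1 h2
  have hrepos : 0 < Complex.re ((w ^ n : Circle) : ℂ) := hS _ (S.pow_mem hwS n)
  rw [hwexp, circle_exp_pow] at hrepos
  rw [show ((Circle.exp ((n : ℝ) * |θ|)) : ℂ) = Complex.exp (((n : ℝ) * |θ| : ℝ) * Complex.I)
    from Circle.coe_exp _, Complex.exp_ofReal_mul_I_re] at hrepos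
  linarith

/-- Every neighborhood of `1` in the Pontryagin dual of a discrete group contains the
annihilator of a finite set. -/
lemma PontryaginAux.exists_finset_ann_subset {A : Type*} [CommGroup A] [TopologicalSpace A]
    [DiscreteTopology A] {N : Set (PontryaginDual A)} (hN : N ∈ nhds 1) :
    ∃ F : Finset A, {ψ : PontryaginDual A | ∀ a ∈ F, ψ a = 1} ⊆ N := by
  have hind := ContinuousMonoidHom.isInducing_toContinuousMap A Circle
  rw [show nhds (1 : PontryaginDual A) = _ from hind.nhds_eq_comap 1,
    ContinuousMap.nhds_compactOpen] at hN
  simp only [comap_iInf, comap_principal] at hN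
  have hle : (⨅ F : Finset A, 𝓟 {ψ : PontryaginDual A | ∀ a ∈ F, ψ a = 1}) ≤
      ⨅ (K : Set A) (_ : IsCompact K) (U : Set Circle) (_ : IsOpen U)
        (_ : Set.MapsTo (ContinuousMonoidHom.toContinuousMap (1 : PontryaginDual A)) K U),
        𝓟 (ContinuousMonoidHom.toContinuousMap ⁻¹'
          {g : C(A, Circle) | Set.MapsTo (⇑g) K U}) := by
    refine le_iInf fun K => le_iInf fun hK => le_iInf fun U => le_iInf fun hU =>
      le_iInf fun h1 => ?_
    have hKfin : K.Finite := isCompact_iff_finite.mp hK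
    refine iInf_le_of_le hKfin.toFinset (principal_mono.2 ?_)
    intro ψ hψ a haK
    have h1a : (1 : Circle) ∈ U := h1 haK
    show ψ a ∈ U
    rw [hψ a (hKfin.mem_toFinset.2 haK)]
    exact h1a
  have hmem : N ∈ ⨅ F : Finset A, 𝓟 {ψ : PontryaginDual A | ∀ a ∈ F, ψ a = 1} := hle hN
  have hdir : Directed (· ≥ ·)
      (fun F : Finset A => 𝓟 {ψ : PontryaginDual A | ∀ a ∈ F, ψ a = 1}) := by
    intro F G
    exact ⟨F ∪ G, principal_mono.2 fun ψ h a ha => h a (Finset.mem_union_left _ ha),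
      principal_mono.2 fun ψ h a ha => h a (Finset.mem_union_right _ ha)⟩
  rw [mem_iInf_of_directed hdir] at hmem
  exact hmem

section DoubleDual

variable (A : Type*) [CommGroup A] [TopologicalSpace A] [DiscreteTopology A]

/-- The canonical map of a discrete abelian group into its double Pontryagin dual. -/
noncomputable def PontryaginAux.doubleDualHom :
    A →* PontryaginDual (PontryaginDual A) where
  toFun a :=
    { toFun := fun ψ => ψ a
      map_one' := rfl
      map_mul' := fun ψ χ => rfl
      continuous_toFun := by
        have h1 : Continuous (ContinuousMonoidHom.toContinuousMap :
            PontryaginDual A → C(A, Circle)) :=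
          (ContinuousMonoidHom.isInducing_toContinuousMap A Circle).continuous
        exact (continuous_eval_const (F := C(A, Circle)) a).comp h1 }
  map_one' := ContinuousMonoidHom.ext fun ψ => map_one ψ
  map_mul' a b := ContinuousMonoidHom.ext fun ψ => map_mul ψ a b

variable {A}

lemma PontryaginAux.subgroup_torsion (hA : ∀ a : A, IsOfFinOrder a) (H : Subgroup A)
    (h : ↥H) : IsOfFinOrder h := by
  have h1 : orderOf (H.subtype h) = orderOf h :=
    orderOf_injective H.subtype H.subtype_injective h
  have h2 := hA (H.subtype h)
  rw [← orderOf_pos_iff] at h2 ⊢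
  rwa [h1] at h2

/-- The restriction map from the Pontryagin dual to characters of a subgroup. -/
noncomputable def PontryaginAux.resHom (H : Subgroup A) :
    PontryaginDual A →* (↥H →* Circle) where
  toFun ψ := ψ.toMonoidHom.comp H.subtype
  map_one' := MonoidHom.ext fun h => rfl
  map_mul' ψ χ := MonoidHom.ext fun h => rfl

lemma PontryaginAux.resHom_surjective (H : Subgroup A) :
    Function.Surjective (resHom H) := by
  intro φ
  obtain ⟨ψ₀, hψ₀⟩ := PontryaginAux.exists_extension H φ
  exact ⟨⟨ψ₀, continuous_of_discreteTopology⟩, MonoidHom.ext fun h => hψ₀ h⟩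

theorem PontryaginAux.doubleDualHom_injective (hA : ∀ a : A, IsOfFinOrder a) :
    Function.Injective (doubleDualHom A) := by
  intro x y hxy
  by_contra hne
  have hne1 : x * y⁻¹ ≠ 1 := by simpa [mul_inv_eq_one] using hne
  obtain ⟨ψ0, hψ0⟩ := PontryaginAux.exists_apply_ne_one (hA _) hne1
  apply hψ0
  have h' : ψ0 x = ψ0 y :=
    DFunLike.congr_fun hxy (⟨ψ0, continuous_of_discreteTopology⟩ : PontryaginDual A)
  rw [map_mul, map_inv, h', mul_inv_cancel]

theorem PontryaginAux.doubleDualHom_surjective (hA : ∀ a : A, IsOfFinOrder a) :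
    Function.Surjective (doubleDualHom A) := by
  intro χ
  set U : Set Circle := {z | 0 < Complex.re (z : ℂ)} with hU
  have hUopen : IsOpen U := by
    have hc : Continuous fun z : Circle => Complex.re (z : ℂ) :=
      Complex.continuous_re.comp continuous_subtype_val
    exact isOpen_lt continuous_const hc
  have hNmem : ⇑χ ⁻¹' U ∈ nhds (1 : PontryaginDual A) := by
    refine (hUopen.preimage (map_continuous χ)).mem_nhds ?_
    show 0 < Complex.re ((χ 1 : Circle) : ℂ)
    rw [map_one]
    norm_num
  obtain ⟨F, hF⟩ := PontryaginAux.exists_finset_ann_subset hNmem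
  set H := Subgroup.closure (F : Set A) with hHdef
  haveI : Group.FG ↥H := Group.closure_finset_fg F
  haveI : Finite ↥H := CommGroup.finite_of_fg_torsion ↥H (fun h => subgroup_torsion hA H h)
  have hres_surj := resHom_surjective H
  have hker : ∀ ψ : PontryaginDual A, resHom H ψ = 1 → χ ψ = 1 := by
    intro ψ hψ
    refine circle_subgroup_trivial (S := (MonoidHom.ker (resHom H)).map χ.toMonoidHom)
      ?_ (Subgroup.mem_map.2 ⟨ψ, hψ, rfl⟩)
    rintro w hw
    obtain ⟨ψ', hψ', rfl⟩ := Subgroup.mem_map.1 hw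
    refine hF ?_
    intro a haF
    have haH : a ∈ H := Subgroup.subset_closure haF
    exact DFunLike.congr_fun (hψ' : resHom H ψ' = 1) (⟨a, haH⟩ : ↥H)
  let e := QuotientGroup.quotientKerEquivOfSurjective (resHom H) hres_surj
  let χq : _ →* Circle := QuotientGroup.lift (MonoidHom.ker (resHom H)) χ.toMonoidHom hker
  let χ' : (↥H →* Circle) →* Circle := χq.comp e.symm.toMonoidHom
  have hχ' : ∀ ψ : PontryaginDual A, χ' (resHom H ψ) = χ ψ := by
    intro ψ
    have he : e (QuotientGroup.mk ψ) = resHom H ψ := rfl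
    show χq (e.symm (resHom H ψ)) = χ ψ
    rw [← he, MulEquiv.symm_apply_apply]
    exact QuotientGroup.lift_mk' _ _ _
  obtain ⟨h0, hh0⟩ : ∃ h : ↥H, ∀ φ : ↥H →* Circle, χ' φ = φ h := by
    let evH : ↥H →* ((↥H →* Circle) →* Circle) :=
      { toFun := fun h =>
          { toFun := fun φ => φ h
            map_one' := rfl
            map_mul' := fun _ _ => rfl }
        map_one' := MonoidHom.ext fun φ => map_one φ
        map_mul' := fun a b => MonoidHom.ext fun φ => map_mul φ a b }
    have hinj : Function.Injective evH := by
      intro x y hxy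
      by_contra hne
      have hne1 : x * y⁻¹ ≠ 1 := by simpa [mul_inv_eq_one] using hne
      obtain ⟨φ, hφ⟩ := exists_ne_one_finite hne1
      apply hφ
      have h := congrArg (fun ξ => ξ φ) hxy
      have h' : φ x = φ y := h
      rw [map_mul, map_inv, h', mul_inv_cancel]
    haveI : Finite (↥H →* Circle) := by
      obtain ⟨eH⟩ := nonempty_mulEquiv_circleChar ↥H
      exact Finite.of_equiv _ eH.toEquiv.symm
    haveI : Finite ((↥H →* Circle) →* Circle) := by
      obtain ⟨eD⟩ := nonempty_mulEquiv_circleChar (↥H →* Circle)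
      exact Finite.of_equiv _ eD.toEquiv.symm
    have hcard : Nat.card ↥H = Nat.card ((↥H →* Circle) →* Circle) := by
      obtain ⟨e1⟩ := nonempty_mulEquiv_circleChar (↥H →* Circle)
      obtain ⟨e2⟩ := nonempty_mulEquiv_circleChar ↥H
      rw [Nat.card_congr e1.toEquiv, Nat.card_congr e2.toEquiv]
    have hbij : Function.Bijective evH :=
      (Nat.bijective_iff_injective_and_card evH).2 ⟨hinj, hcard⟩
    obtain ⟨h0, hh0⟩ := hbij.2 χ'
    exact ⟨h0, fun φ => by rw [← hh0]; rfl⟩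
  refine ⟨(h0 : A), ?_⟩
  apply ContinuousMonoidHom.ext
  intro ψ
  show ψ (h0 : A) = χ ψ
  rw [← hχ' ψ, hh0 (resHom H ψ)]
  rfl

/-- Pontryagin duality for discrete torsion abelian groups. -/
noncomputable def PontryaginAux.doubleDualEquiv (hA : ∀ a : A, IsOfFinOrder a) :
    A ≃* PontryaginDual (PontryaginDual A) :=
  MulEquiv.ofBijective (doubleDualHom A)
    ⟨doubleDualHom_injective hA, doubleDualHom_surjective hA⟩

end DoubleDual

/-- Two countable discrete abelian torsion groups are isomorphic iff their Pontryagin duals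
are isomorphic as topological groups. -/
theorem pontryaginDual_iso_iff
    (A B : Type*) [CommGroup A] [CommGroup B] [Countable A] [Countable B]
    [TopologicalSpace A] [DiscreteTopology A] [TopologicalSpace B] [DiscreteTopology B]
    (hA : ∀ a : A, IsOfFinOrder a) (hB : ∀ b : B, IsOfFinOrder b) :
    Nonempty (A ≃* B) ↔
      ∃ e : PontryaginDual A ≃* PontryaginDual B, Continuous e ∧ Continuous e.symm := by
  constructor
  · rintro ⟨i⟩
    let f : ContinuousMonoidHom B A := ⟨i.symm.toMonoidHom, continuous_of_discreteTopology⟩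
    let g : ContinuousMonoidHom A B := ⟨i.toMonoidHom, continuous_of_discreteTopology⟩
    refine ⟨{ toFun := PontryaginDual.map f
              invFun := PontryaginDual.map g
              left_inv := fun χ => ContinuousMonoidHom.ext fun a => ?_
              right_inv := fun χ => ContinuousMonoidHom.ext fun b => ?_
              map_mul' := fun χ₁ χ₂ => map_mul (PontryaginDual.map f) χ₁ χ₂ }, ?_, ?_⟩
    · show χ (i.symm (i a)) = χ a
      rw [i.symm_apply_apply]
    · show χ (i (i.symm b)) = χ b
      rw [i.apply_symm_apply]
    · exact map_continuous (PontryaginDual.map f)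
    · exact map_continuous (PontryaginDual.map g)
  · rintro ⟨e, he, hesymm⟩
    let fe : ContinuousMonoidHom (PontryaginDual A) (PontryaginDual B) :=
      ⟨e.toMonoidHom, he⟩
    let fesymm : ContinuousMonoidHom (PontryaginDual B) (PontryaginDual A) :=
      ⟨e.symm.toMonoidHom, hesymm⟩
    let E : PontryaginDual (PontryaginDual A) ≃* PontryaginDual (PontryaginDual B) :=
      { toFun := fun χ => χ.comp fesymm
        invFun := fun χ => χ.comp fe
        left_inv := fun χ => ContinuousMonoidHom.ext fun ψ => congrArg χ (e.symm_apply_apply ψ)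
        right_inv := fun χ => ContinuousMonoidHom.ext fun ψ => congrArg χ (e.apply_symm_apply ψ)
        map_mul' := fun χ₁ χ₂ => ContinuousMonoidHom.ext fun ψ => rfl }
    exact ⟨((PontryaginAux.doubleDualEquiv hA).trans E).trans
      (PontryaginAux.doubleDualEquiv hB).symm⟩
end

section
/- The equivalence relation E_0 of eventual equality on Cantor space is not smooth: there is no Borel measurable function f : (ℕ → {0,1}) → ℝ such that for all x, y, (x(n) = y(n) for all but finitely many n) if and only if f(x) = f(y). -/
set_option maxHeartbeats 1000000

open Set Filter Topology

namespace E0NotSmoothAux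

abbrev Cant := ℕ → Bool

/-- The xor-by-mask bijection of Cantor space. -/
def flipEquiv (m : Cant) : Cant ≃ Cant where
  toFun x := fun n => xor (m n) (x n)
  invFun x := fun n => xor (m n) (x n)
  left_inv x := by
    funext n
    show xor (m n) (xor (m n) (x n)) = x n
    cases m n <;> cases x n <;> rfl
  right_inv x := by
    funext n
    show xor (m n) (xor (m n) (x n)) = x n
    cases m n <;> cases x n <;> rfl

/-- The xor-by-mask homeomorphism of Cantor space. -/
def flipMask (m : Cant) : Cant ≃ₜ Cant where
  toEquiv := flipEquiv m
  continuous_toFun := continuous_pi fun n =>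
    (continuous_of_discreteTopology (f := fun b => xor (m n) b)).comp (continuous_apply n)
  continuous_invFun := continuous_pi fun n =>
    (continuous_of_discreteTopology (f := fun b => xor (m n) b)).comp (continuous_apply n)

lemma flipMask_apply (m x : Cant) (n : ℕ) : flipMask m x n = xor (m n) (x n) := rfl

lemma nhdsWithin_ne_neBot (x : Cant) : (𝓝[≠] x).NeBot := by
  rw [← mem_closure_iff_nhdsWithin_neBot]
  have htend : Tendsto (fun k => Function.update x k (!x k)) atTop (𝓝 x) := by
    rw [tendsto_pi_nhds]
    intro i
    apply tendsto_const_nhds.congr'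
    filter_upwards [eventually_gt_atTop i] with k hk
    exact (Function.update_of_ne (by omega) _ _).symm
  refine mem_closure_of_tendsto htend (Eventually.of_forall fun k => ?_)
  simp only [mem_compl_iff, mem_singleton_iff]
  intro h
  have := congrFun h k
  simp at this

lemma isMeagre_of_countable {s : Set Cant} (hs : s.Countable) : IsMeagre s := by
  have hsub : s ⊆ ⋃ y : s, {(y : Cant)} := fun z hz => mem_iUnion.2 ⟨⟨z, hz⟩, rfl⟩
  haveI := hs.to_subtype
  refine IsMeagre.mono hsub ?_
  rw [IsMeagre, compl_iUnion, countable_iInter_mem]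
  intro y
  haveI := nhdsWithin_ne_neBot (y : Cant)
  exact residual_of_dense_open isOpen_compl_singleton (dense_compl_singleton _)

lemma not_meagre_of_residual {s : Set Cant} (hs : s ∈ residual Cant) : ¬ IsMeagre s := by
  intro hm
  have h : s ∩ sᶜ ∈ residual Cant := inter_mem hs hm
  rw [inter_compl_self] at h
  obtain ⟨x, hx⟩ := (dense_of_mem_residual h).nonempty
  exact hx

/-- Generic ergodicity of `E₀`: an invariant Baire measurable set is meager or comeager. -/
lemma meager_or_residual {A : Set Cant} (hA : BaireMeasurableSet A)
    (hinv : ∀ x y : Cant, {n | x n ≠ y n}.Finite → (x ∈ A ↔ y ∈ A)) :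
    IsMeagre A ∨ A ∈ residual Cant := by
  obtain ⟨U, hUo, hAU⟩ := hA.residualEq_isOpen
  have hD : {x : Cant | x ∈ A ↔ x ∈ U} ∈ residual Cant := by
    filter_upwards [hAU] with x hx
    exact iff_of_eq hx
  rcases U.eq_empty_or_nonempty with hUe | ⟨u, hu⟩
  · left
    rw [IsMeagre]
    filter_upwards [hD] with x hx
    simp only [mem_compl_iff]
    intro hxA
    have := hx.1 hxA
    rw [hUe] at this
    exact this
  · right
    have hUnhds : U ∈ 𝓝 u := hUo.mem_nhds hu
    rw [nhds_pi, Filter.mem_pi] at hUnhds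
    obtain ⟨I, hIfin, V, hV, hVU⟩ := hUnhds
    obtain ⟨N, hN⟩ : ∃ N : ℕ, ∀ i ∈ I, i < N := by
      obtain ⟨b, hb⟩ := hIfin.bddAbove
      exact ⟨b + 1, fun i hi => Nat.lt_succ_of_le (hb hi)⟩
    set C : Set Cant := {x | ∀ i < N, x i = u i} with hCdef
    have hCU : C ⊆ U := by
      intro x hx
      apply hVU
      intro i hi
      rw [hx i (hN i hi)]
      exact mem_of_mem_nhds (hV i)
    have hCA : IsMeagre (C \ A) := by
      rw [IsMeagre]
      filter_upwards [hD] with x hx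
      simp only [mem_compl_iff, mem_diff, not_and, not_not]
      intro hxC
      exact hx.2 (hCU hxC)
    set mask : (Fin N → Bool) → Cant := fun w i => if h : i < N then w ⟨i, h⟩ else false
      with hmaskdef
    have hdiff : ∀ (w : Fin N → Bool) (x : Cant),
        {n | flipMask (mask w) x n ≠ x n}.Finite := by
      intro w x
      apply (Set.finite_Iio N).subset
      intro n hn
      simp only [mem_setOf_eq, flipMask_apply] at hn
      by_contra hnN
      have hge : ¬ n < N := fun h => hnN h
      have : mask w n = false := by simp [hmaskdef, hge]
      rw [this] at hn
      exact hn (Bool.false_xor _)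
    have key : Aᶜ ⊆ ⋃ w : Fin N → Bool, (flipMask (mask w)) ⁻¹' (C \ A) := by
      intro x hxA
      have hw : flipMask (mask fun i : Fin N => xor (u i) (x i)) x ∈ C \ A := by
        constructor
        · intro i hi
          show xor (mask (fun i : Fin N => xor (u i) (x i)) i) (x i) = u i
          have hmi : mask (fun i : Fin N => xor (u i) (x i)) i = xor (u i) (x i) := by
            simp [hmaskdef, hi]
          rw [hmi]
          cases u i <;> cases x i <;> rfl
        · intro hmem
          exact hxA ((hinv (flipMask (mask fun i : Fin N => xor (u i) (x i)) x) x
            (hdiff (fun i : Fin N => xor (u i) (x i)) x)).1 hmem)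
      exact mem_iUnion.2 ⟨fun i : Fin N => xor (u i) (x i), mem_preimage.2 hw⟩
    have hmeag : IsMeagre Aᶜ := by
      refine IsMeagre.mono key ?_
      rw [IsMeagre, compl_iUnion, countable_iInter_mem]
      intro w
      exact IsMeagre.preimage_of_isOpenMap (flipMask (mask w)).continuous
        (flipMask (mask w)).isOpenMap hCA
    rwa [IsMeagre, compl_compl] at hmeag

end E0NotSmoothAux

open E0NotSmoothAux

/-- The equivalence relation `E₀` of eventual equality on Cantor space is not smooth: no Borel
measurable function `f : 2^ℕ → ℝ` satisfies `x E₀ y ↔ f x = f y`. -/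
theorem e0_not_smooth :
    ¬ ∃ f : (ℕ → Bool) → ℝ,
        @Measurable _ _ (borel (ℕ → Bool)) _ f ∧
        ∀ x y : ℕ → Bool, {n : ℕ | x n ≠ y n}.Finite ↔ f x = f y := by
  rintro ⟨f, hf, hE⟩
  haveI hBS : @BorelSpace Cant _ (borel Cant) := @BorelSpace.mk Cant _ (borel Cant) rfl
  have hBM : ∀ {s : Set ℝ}, MeasurableSet s → BaireMeasurableSet (f ⁻¹' s) := fun hs =>
    @MeasurableSet.baireMeasurableSet Cant _ _ (borel Cant) hBS (hf hs)
  have mc : ∀ t : ℝ, IsMeagre (f ⁻¹' Iic t) ∨ f ⁻¹' Iic t ∈ residual Cant := by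
    intro t
    refine meager_or_residual (hBM measurableSet_Iic) ?_
    intro x y h
    simp only [mem_preimage]
    rw [(hE x y).1 h]
  set S : Set ℝ := {t : ℝ | f ⁻¹' Iic t ∈ residual Cant} with hSdef
  have hSne : S.Nonempty := by
    by_contra h
    rw [Set.not_nonempty_iff_eq_empty] at h
    have hall : ∀ t : ℝ, IsMeagre (f ⁻¹' Iic t) := by
      intro t
      rcases mc t with hm | hr
      · exact hm
      · exact absurd (show t ∈ S from hr) (by simp [h])
    have huniv : (univ : Set Cant) ⊆ ⋃ n : ℕ, f ⁻¹' Iic (n : ℝ) := by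
      intro x _
      obtain ⟨n, hn⟩ := exists_nat_ge (f x)
      exact mem_iUnion.2 ⟨n, hn⟩
    exact not_meagre_of_residual univ_mem
      (IsMeagre.mono huniv (isMeagre_iUnion fun n => hall n))
  have hbdd : BddBelow S := by
    have hex : ∃ n : ℕ, f ⁻¹' Iic (-(n : ℝ)) ∉ residual Cant := by
      by_contra h
      push_neg at h
      have hint : ⋂ n : ℕ, f ⁻¹' Iic (-(n : ℝ)) ∈ residual Cant :=
        countable_iInter_mem.2 h
      have heq : ⋂ n : ℕ, f ⁻¹' Iic (-(n : ℝ)) = (∅ : Set Cant) := by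
        ext x
        simp only [mem_iInter, mem_preimage, mem_Iic, mem_empty_iff_false, iff_false, not_forall]
        obtain ⟨n, hn⟩ := exists_nat_gt (-(f x))
        exact ⟨n, by push_neg; linarith⟩
      rw [heq] at hint
      exact not_meagre_of_residual hint (by rw [IsMeagre, compl_empty]; exact univ_mem)
    obtain ⟨n, hn⟩ := hex
    refine ⟨-(n : ℝ), fun t ht => ?_⟩
    by_contra hlt
    push_neg at hlt
    exact hn (mem_of_superset ht (preimage_mono (Iic_subset_Iic.2 hlt.le)))
  set c : ℝ := sInf S with hcdef
  have hIic : f ⁻¹' Iic c ∈ residual Cant := by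
    have heq : f ⁻¹' Iic c = ⋂ n : ℕ, f ⁻¹' Iic (c + 1 / (n + 1)) := by
      ext x
      simp only [mem_preimage, mem_Iic, mem_iInter]
      constructor
      · intro h n
        have hp : (0 : ℝ) < 1 / ((n : ℝ) + 1) := by positivity
        linarith
      · intro h
        refine le_of_forall_pos_le_add fun ε hε => ?_
        obtain ⟨n, hn⟩ := exists_nat_one_div_lt hε
        have := h n
        linarith
    rw [heq, countable_iInter_mem]
    intro n
    rcases mc (c + 1 / (n + 1)) with hm | hr
    · exfalso
      have hclt : c < c + 1 / ((n : ℝ) + 1) := by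
        have hp : (0 : ℝ) < 1 / ((n : ℝ) + 1) := by positivity
        linarith
      obtain ⟨t, htS, htlt⟩ := (csInf_lt_iff hbdd hSne).1 hclt
      exact not_meagre_of_residual
        (mem_of_superset htS (preimage_mono (Iic_subset_Iic.2 htlt.le))) hm
    · exact hr
  have hIio : IsMeagre (f ⁻¹' Iio c) := by
    have heq : f ⁻¹' Iio c = ⋃ n : ℕ, f ⁻¹' Iic (c - 1 / (n + 1)) := by
      ext x
      simp only [mem_preimage, mem_Iio, mem_iUnion, mem_Iic]
      constructor
      · intro h
        obtain ⟨n, hn⟩ := exists_nat_one_div_lt (sub_pos.2 h)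
        exact ⟨n, by linarith⟩
      · rintro ⟨n, hn⟩
        have hp : (0 : ℝ) < 1 / ((n : ℝ) + 1) := by positivity
        linarith
    rw [heq]
    apply isMeagre_iUnion
    intro n
    rcases mc (c - 1 / (n + 1)) with hm | hr
    · exact hm
    · exfalso
      have hle := csInf_le hbdd (show c - 1 / (n + 1) ∈ S from hr)
      have hp : (0 : ℝ) < 1 / ((n : ℝ) + 1) := by positivity
      rw [← hcdef] at hle
      linarith
  have hA : f ⁻¹' {c} ∈ residual Cant := by
    have heq : f ⁻¹' {c} = f ⁻¹' Iic c ∩ (f ⁻¹' Iio c)ᶜ := by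
      ext x
      simp only [mem_preimage, mem_singleton_iff, mem_inter_iff, mem_compl_iff,
        mem_Iic, mem_Iio, not_lt]
      constructor
      · intro h
        exact ⟨h.le, h.ge⟩
      · rintro ⟨h1, h2⟩
        exact le_antisymm h1 h2
    rw [heq]
    exact inter_mem hIic hIio
  obtain ⟨x, hx⟩ := (dense_of_mem_residual hA).nonempty
  have hclass : {y : Cant | {n | x n ≠ y n}.Finite}.Countable := by
    have hsub : {y : Cant | {n | x n ≠ y n}.Finite} ⊆
        range (fun s : Finset ℕ => fun n => if n ∈ s then !(x n) else x n) := by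
      intro y hy
      refine ⟨hy.toFinset, ?_⟩
      funext n
      show (if n ∈ Set.Finite.toFinset hy then !(x n) else x n) = y n
      by_cases h : x n = y n
      · rw [if_neg]
        · exact h
        · rw [Set.Finite.mem_toFinset]
          exact not_not_intro h
      · rw [if_pos]
        · cases hxn : x n <;> cases hyn : y n <;> simp_all
        · rw [Set.Finite.mem_toFinset]
          exact h
    exact Set.Countable.mono hsub (countable_range _)
  have hres : f ⁻¹' {c} ∩ {y : Cant | {n | x n ≠ y n}.Finite}ᶜ ∈ residual Cant :=
    inter_mem hA (isMeagre_of_countable hclass)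
  obtain ⟨y, hy1, hy2⟩ := (dense_of_mem_residual hres).nonempty
  apply hy2
  refine (hE x y).2 ?_
  have hfx : f x = c := hx
  have hfy : f y = c := hy1
  rw [hfx, hfy]
end

section
/- Let G be a topological group that is topologically finitely generated, i.e., there is a finite subset S of G such that the subgroup generated by S is dense in G. Then for every natural number n, the set of open subgroups of G of index at most n is finite. -/
/-- In a finitely generated (abstract) group, there are only finitely many subgroups of
index at most `n`. -/
private lemma aux_fg_finite {Γ : Type*} [Group Γ] (T : Finset Γ)
    (hT : Subgroup.closure (T : Set Γ) = ⊤) (n : ℕ) :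
    {K : Subgroup Γ | K.index ≠ 0 ∧ K.index ≤ n}.Finite := by
  classical
  have key : ∀ K : {K : Subgroup Γ // K.index ≠ 0 ∧ K.index ≤ n},
      ∃ (Φ : Γ →* Equiv.Perm (Fin n)) (x : Fin n), ∀ g : Γ, g ∈ K.1 ↔ Φ g x = x := by
    rintro ⟨K, hK0, hKn⟩
    haveI : K.FiniteIndex := ⟨hK0⟩
    let e : Γ ⧸ K ≃ Fin K.index := Finite.equivFinOfCardEq rfl
    let i : Γ ⧸ K ↪ Fin n := e.toEmbedding.trans (Fin.castLEEmb hKn)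
    refine ⟨(Equiv.Perm.viaEmbeddingHom i).comp (MulAction.toPermHom Γ (Γ ⧸ K)),
      i ((1 : Γ) : Γ ⧸ K), fun g => ?_⟩
    rw [MonoidHom.comp_apply, Equiv.Perm.viaEmbeddingHom_apply,
      Equiv.Perm.viaEmbedding_apply, i.injective.eq_iff]
    rw [MulAction.toPermHom_apply, MulAction.toPerm_apply, MulAction.Quotient.smul_mk,
      smul_eq_mul, mul_one, eq_comm, QuotientGroup.eq]
    simp
  choose Φ x hx using key
  have hinj : Function.Injective
      (fun K : {K : Subgroup Γ // K.index ≠ 0 ∧ K.index ≤ n} =>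
        ((fun t : T => Φ K t.1, x K) : (T → Equiv.Perm (Fin n)) × Fin n)) := by
    intro K K' h
    obtain ⟨h1, h2⟩ := Prod.ext_iff.mp h
    dsimp only at h1 h2
    have hΦ : Φ K = Φ K' :=
      MonoidHom.eq_of_eqOn_dense hT fun s hs =>
        congrFun h1 ⟨s, Finset.mem_coe.mp hs⟩
    refine Subtype.ext (Subgroup.ext fun g => ?_)
    rw [hx K g, hx K' g, hΦ, h2]
  exact Set.finite_coe_iff.mp (Finite.of_injective _ hinj)

/-- In a topologically finitely generated topological group, for every `n` there are only
finitely many open subgroups of index at most `n`. -/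
theorem finitely_many_open_subgroups_of_bounded_index
    (G : Type*) [Group G] [TopologicalSpace G] [IsTopologicalGroup G]
    (hfg : ∃ S : Finset G, Dense ((Subgroup.closure (S : Set G) : Subgroup G) : Set G))
    (n : ℕ) :
    {H : Subgroup G | IsOpen (H : Set G) ∧ H.index ≠ 0 ∧ H.index ≤ n}.Finite := by
  classical
  obtain ⟨S, hS⟩ := hfg
  set Γ : Subgroup G := Subgroup.closure (S : Set G) with hΓ
  have hTgen : Subgroup.closure
      ((S.preimage ((↑) : Γ → G) Subtype.val_injective.injOn : Finset Γ) : Set Γ) = ⊤ := by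
    rw [Finset.coe_preimage]
    exact Subgroup.closure_closure_coe_preimage
  have haux := aux_fg_finite _ hTgen n
  apply Set.Finite.of_finite_image (f := fun H : Subgroup G => H.subgroupOf Γ)
  · apply haux.subset
    rintro K ⟨H, ⟨hopen, hne, hle⟩, rfl⟩
    haveI : H.FiniteIndex := ⟨hne⟩
    refine ⟨Subgroup.FiniteIndex.index_ne_zero, ?_⟩
    calc (H.subgroupOf Γ).index = H.relIndex Γ := rfl
      _ ≤ H.relIndex ⊤ :=
          Subgroup.relIndex_le_of_le_right le_top
            (by rwa [Subgroup.relIndex_top_right])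
      _ = H.index := Subgroup.relIndex_top_right H
      _ ≤ n := hle
  · rintro H₁ ⟨ho₁, -, -⟩ H₂ ⟨ho₂, -, -⟩ heq
    have hdense : Dense (Γ : Set G) := hS
    have hclos : ∀ H : Subgroup G, IsOpen (H : Set G) →
        (H : Set G) = closure ((H : Set G) ∩ (Γ : Set G)) := by
      intro H ho
      refine Set.Subset.antisymm (hdense.open_subset_closure_inter ho) ?_
      calc closure ((H : Set G) ∩ (Γ : Set G)) ⊆ closure (H : Set G) :=
            closure_mono Set.inter_subset_left
        _ = H := (Subgroup.isClosed_of_isOpen H ho).closure_eq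
    have h1 : ∀ H : Subgroup G,
        (H : Set G) ∩ (Γ : Set G) = Subtype.val '' ((H.subgroupOf Γ : Subgroup Γ) : Set Γ) := by
      intro H
      ext g
      constructor
      · rintro ⟨hgH, hgΓ⟩
        exact ⟨⟨g, hgΓ⟩, by simpa [Subgroup.mem_subgroupOf] using hgH, rfl⟩
      · rintro ⟨γ, hγ, rfl⟩
        exact ⟨by simpa [Subgroup.mem_subgroupOf] using hγ, γ.2⟩
    dsimp only at heq
    have hsets : (H₁ : Set G) ∩ (Γ : Set G) = (H₂ : Set G) ∩ (Γ : Set G) := by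
      rw [h1, h1, heq]
    apply SetLike.ext'
    rw [hclos H₁ ho₁, hclos H₂ ho₂, hsets]
end

section
/- Every second countable profinite group G has a generating sequence converging to 1: there is a sequence (g_i)_{i∈ℕ} of elements of G such that g_i → 1 in the topology of G and the closure of the subgroup generated by {g_i : i ∈ ℕ} is all of G. -/
open Pointwise


private def auxN {G : Type*} [Group G] [TopologicalSpace G]
    (M : ℕ → OpenNormalSubgroup G) : ℕ → OpenNormalSubgroup G
  | 0 => ⟨⊤, inferInstanceAs (⊤ : Subgroup G).Normal⟩
  | n + 1 => auxN M n ⊓ M n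

/-- Every second countable profinite group has a generating sequence converging to `1`: a
sequence tending to the identity whose generated subgroup is dense. -/
theorem exists_generating_sequence_tendsto_one
    (G : Type*) [Group G] [TopologicalSpace G] [IsTopologicalGroup G]
    [CompactSpace G] [T2Space G] [TotallyDisconnectedSpace G] [SecondCountableTopology G] :
    ∃ g : ℕ → G, Filter.Tendsto g Filter.atTop (nhds 1) ∧
      closure ((Subgroup.closure (Set.range g) : Subgroup G) : Set G) = Set.univ := by
  classical
  -- countable antitone basis of neighborhoods of 1
  obtain ⟨V, hV⟩ := (nhds (1 : G)).exists_antitone_basis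
  -- in every basic neighborhood, an open normal subgroup
  have hM : ∀ m : ℕ, ∃ H : OpenNormalSubgroup G, (H : Set G) ⊆ V m := by
    intro m
    have hVm : V m ∈ nhds (1 : G) := hV.1.mem_of_mem trivial
    obtain ⟨U, hUV, hUopen, h1U⟩ := mem_nhds_iff.mp hVm
    obtain ⟨W, hWclopen, h1W, hWU⟩ := compact_exists_isClopen_in_isOpen hUopen h1U
    obtain ⟨H, hH⟩ :=
      IsTopologicalGroup.exist_openNormalSubgroup_sub_clopen_nhds_of_one hWclopen h1W
    exact ⟨H, hH.trans (hWU.trans hUV)⟩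
  choose M hM using hM
  -- decreasing sequence of open normal subgroups
  obtain ⟨N, hN0, hNsucc⟩ : ∃ N : ℕ → OpenNormalSubgroup G, (∀ x : G, x ∈ N 0) ∧
      ∀ n, N (n + 1) = N n ⊓ M n :=
    ⟨auxN M, fun x => trivial, fun n => rfl⟩
  have hNanti : Antitone N := antitone_nat_of_succ_le fun n => by
    rw [hNsucc]; exact inf_le_left
  have hNM : ∀ n, (N (n + 1) : Set G) ⊆ V n := fun n x hx =>
    hM n (by rw [hNsucc] at hx; exact hx.2)
  -- finite coset representatives
  have hL : ∀ n : ℕ, ∃ l : List G, (∀ t ∈ l, t ∈ N n) ∧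
      ∀ y ∈ N n, ∃ t ∈ l, ∃ z ∈ N (n + 1), y = t * z := by
    intro n
    have hcomp : IsCompact ((N n : Set G)) := by
      exact ((N n).toOpenSubgroup.isClosed).isCompact
    have hcover : (N n : Set G) ⊆ ⋃ x ∈ (N n : Set G), x • (N (n + 1) : Set G) := by
      intro y hy
      exact Set.mem_biUnion hy ⟨1, (N (n + 1)).one_mem', by simp⟩
    obtain ⟨T, hTsub, hTfin, hTcover⟩ := hcomp.elim_finite_subcover_image
      (fun x _ => (N (n + 1)).toOpenSubgroup.isOpen.smul x) hcover
    refine ⟨hTfin.toFinset.toList, ?_, ?_⟩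
    · intro t ht
      exact hTsub (by simpa using ht)
    · intro y hy
      obtain ⟨t, ht, z, hz, hyz⟩ := by
        simpa [Set.mem_smul_set] using hTcover hy
      exact ⟨t, by simpa using ht, z, hz, hyz.symm⟩
  choose L hL1 hL2 using hL
  -- the sequence
  let f : ℕ → ℕ → G := fun n j => (L n).getD j 1
  let g : ℕ → G := fun k => f (Nat.unpair k).1 (Nat.unpair k).2
  have hfmem : ∀ n j, f n j ∈ N n := by
    intro n j
    by_cases h : j < (L n).length
    · rw [show f n j = (L n)[j] from List.getD_eq_getElem _ _ h]
      exact hL1 n _ (List.getElem_mem h)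
    · rw [show f n j = 1 from List.getD_eq_default _ _ (not_lt.mp h)]
      exact (N n).one_mem'
  have hg : ∀ n j, g (Nat.pair n j) = f n j := by
    intro n j; simp only [g, Nat.unpair_pair]
  set H : Subgroup G := Subgroup.closure (Set.range g) with hH
  -- everything is a product of an element of H and an element of N n
  have key : ∀ n, ∀ x : G, ∃ h ∈ H, ∃ y ∈ N n, x = h * y := by
    intro n
    induction n with
    | zero => exact fun x => ⟨1, H.one_mem, x, hN0 x, (one_mul x).symm⟩
    | succ n ih =>
      intro x
      obtain ⟨h, hh, y, hy, rfl⟩ := ih x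
      obtain ⟨t, ht, z, hz, rfl⟩ := hL2 n y hy
      obtain ⟨j, hj, rfl⟩ := List.mem_iff_getElem.mp ht
      have htg : (L n)[j] ∈ H := by
        have : (L n)[j] = g (Nat.pair n j) := by
          rw [hg, show f n j = (L n)[j] from List.getD_eq_getElem _ _ hj]
        rw [this]
        exact Subgroup.subset_closure ⟨Nat.pair n j, rfl⟩
      exact ⟨h * (L n)[j], H.mul_mem hh htg, z, hz, (mul_assoc _ _ _).symm⟩
  refine ⟨g, ?_, ?_⟩
  · -- tendsto
    rw [hV.1.tendsto_right_iff]
    intro m _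
    have hfin : {k : ℕ | g k ∉ N (m + 1)}.Finite := by
      apply Set.Finite.subset (Set.Finite.biUnion (Set.finite_Iio (m + 1))
        (fun n _ => (Set.finite_Iio (L n).length).image (fun j => Nat.pair n j)))
      intro k hk
      set n := (Nat.unpair k).1 with hn
      set j := (Nat.unpair k).2 with hj
      have hk' : g k = f n j := rfl
      have hnm : n < m + 1 := by
        by_contra hc
        exact hk ((hNanti (not_lt.mp hc)) (hfmem n j))
      have hjl : j < (L n).length := by
        by_contra hc
        apply hk
        rw [hk', show f n j = 1 from List.getD_eq_default _ _ (not_lt.mp hc)]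
        exact (N (m + 1)).one_mem'
      exact Set.mem_biUnion hnm ⟨j, hjl, Nat.pair_unpair k⟩
    have hev := hfin.eventually_cofinite_notMem
    rw [Nat.cofinite_eq_atTop] at hev
    filter_upwards [hev] with k hk
    exact hNM m (not_not.mp hk)
  · -- density
    rw [Set.eq_univ_iff_forall]
    intro x
    rw [mem_closure_iff]
    intro o ho hxo
    have hP : (fun y => x * y) ⁻¹' o ∈ nhds (1 : G) :=
      (ho.preimage (continuous_mul_left x)).mem_nhds (by simpa using hxo)
    obtain ⟨m, -, hm⟩ := hV.1.mem_iff.mp hP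
    obtain ⟨h, hh, y, hy, hxy⟩ := key (m + 1) x
    refine ⟨h, ?_, hh⟩
    have : y⁻¹ ∈ N (m + 1) := (N (m + 1)).inv_mem' hy
    have hmem : x * y⁻¹ ∈ o := hm (hNM m this)
    rwa [hxy, mul_assoc, mul_inv_cancel, mul_one] at hmem
end
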